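/- arXiv:1604.05345 — 8 statements merged into one kernel-verified Lean document; each statement's English description precedes it below -/
import Mathlib

section
/- For every integer n ≥ 2 with binary expansion n = Σ_{i=a}^{e} n_i·2^i (n_a ≠ 0 ≠ n_e), the number of triples (j,k,ℓ) with j ≥ 1, k ≥ 0, ℓ ≥ 2j, and n = 2^{2j−2} + k·2^{2j} + 2^ℓ equals e − 2j + 1 when a = 2j−2 is even, n_{a+1} = 0, and n is not a power of 2; otherwise it equals 0. -/
open Classical

private lemma aux_val (j k ℓ : ℕ) (hj : 1 ≤ j) (hℓ : 2 * j ≤ ℓ) :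
    padicValNat 2 (2 ^ (2 * j - 2) + k * 2 ^ (2 * j) + 2 ^ ℓ) = 2 * j - 2 := by
  obtain ⟨j, rfl⟩ : ∃ j', j = j' + 1 := ⟨j - 1, by omega⟩
  obtain ⟨t, rfl⟩ : ∃ t, ℓ = 2 * j + 2 + t := ⟨ℓ - (2 * j + 2), by omega⟩
  have h1 : 2 * (j + 1) - 2 = 2 * j := by omega
  rw [h1]
  have h2 : 2 ^ (2 * j) + k * 2 ^ (2 * (j + 1)) + 2 ^ (2 * j + 2 + t)
      = 2 ^ (2 * j) * (1 + k * 4 + 2 ^ (2 + t)) := by ring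
  have h3 : (2 : ℕ) ∣ 2 ^ (2 + t) := dvd_pow_self 2 (by omega)
  rw [h2, padicValNat.mul (by positivity) (by positivity), padicValNat.prime_pow,
    padicValNat.eq_zero_of_not_dvd (by omega), add_zero]

/-- Lemma S2: count of triples (j,k,ℓ) with j ≥ 1, k ≥ 0, ℓ ≥ 2j and
n = 2^{2j−2} + k·2^{2j} + 2^ℓ. -/

theorem stmt1 (n : ℕ) (hn : 2 ≤ n) :
    ({p : ℕ × ℕ × ℕ | 1 ≤ p.1 ∧ 2 * p.1 ≤ p.2.2 ∧
        n = 2 ^ (2 * p.1 - 2) + p.2.1 * 2 ^ (2 * p.1) + 2 ^ p.2.2}.ncard : ℤ) =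
      if padicValNat 2 n % 2 = 0 ∧ n.testBit (padicValNat 2 n + 1) = false ∧
          ¬∃ c : ℕ, n = 2 ^ c then
        (Nat.log 2 n : ℤ) - padicValNat 2 n - 1
      else 0 := by
  set a := padicValNat 2 n with ha
  -- Every member of the set forces the three conditions.
  have key : ∀ j k ℓ : ℕ, (1 ≤ j ∧ 2 * j ≤ ℓ ∧
      n = 2 ^ (2 * j - 2) + k * 2 ^ (2 * j) + 2 ^ ℓ) →
      a = 2 * j - 2 ∧ n.testBit (a + 1) = false ∧ ¬∃ c : ℕ, n = 2 ^ c := by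
    rintro j k ℓ ⟨hj, hℓ, hne⟩
    have hval : a = 2 * j - 2 := by rw [ha, hne, aux_val j k ℓ hj hℓ]
    have h2j : 2 * j = a + 2 := by omega
    refine ⟨hval, ?_, ?_⟩
    · -- testBit (a+1) = false
      obtain ⟨t, rfl⟩ : ∃ t, ℓ = a + 2 + t := ⟨ℓ - (a + 2), by omega⟩
      have hform : n = 2 ^ a + 2 ^ (a + 1) * (2 * (k + 2 ^ t)) := by
        rw [hne]
        have h2 : 2 * j - 2 = a := by omega
        rw [h2, h2j]; ring
      have hdiv : n / 2 ^ (a + 1) = 2 * (k + 2 ^ t) := by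
        rw [hform, Nat.add_mul_div_left _ _ (by positivity),
          Nat.div_eq_of_lt (by exact Nat.pow_lt_pow_succ one_lt_two), Nat.zero_add]
      rw [Nat.testBit_eq_decide_div_mod_eq, hdiv]
      simp [Nat.mul_mod_right]
    · rintro ⟨c, hc⟩
      have hac : a = c := by rw [ha, hc, padicValNat.prime_pow]
      obtain ⟨t, rfl⟩ : ∃ t, ℓ = a + 2 + t := ⟨ℓ - (a + 2), by omega⟩
      have h2 : 2 * j - 2 = a := by omega
      rw [h2, h2j, hc, ← hac] at hne
      have hp1 : 0 < 2 ^ (a + 2 + t) := by positivity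
      omega
  by_cases hC : a % 2 = 0 ∧ n.testBit (a + 1) = false ∧ ¬∃ c : ℕ, n = 2 ^ c
  · rw [if_pos hC]
    obtain ⟨hae, hbit, hnp⟩ := hC
    -- express n = 2^a + m * 2^(a+2)
    have hn0 : n ≠ 0 := by omega
    obtain ⟨u, hu⟩ : 2 ^ a ∣ n := pow_padicValNat_dvd
    have hu_odd : u % 2 = 1 := by
      rcases Nat.mod_two_eq_zero_or_one u with h | h
      · exfalso
        obtain ⟨v, hv⟩ := Nat.dvd_of_mod_eq_zero h
        have : 2 ^ (a + 1) ∣ n := ⟨v, by rw [hu, hv]; ring⟩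
        exact pow_succ_padicValNat_not_dvd hn0 this
      · exact h
    have hmod1 : n % 2 ^ (a + 1) = 2 ^ a := by
      rw [hu, pow_succ, Nat.mul_mod_mul_left, hu_odd, mul_one]
    have hbit' : n / 2 ^ (a + 1) % 2 = 0 := by
      rw [Nat.testBit_eq_decide_div_mod_eq, decide_eq_false_iff_not] at hbit
      omega
    have hmod2 : n % 2 ^ (a + 2) = 2 ^ a := by
      have h12 : (a : ℕ) + 2 = (a + 1) + 1 := rfl
      rw [h12, pow_succ, Nat.mod_mul, hmod1, hbit', Nat.mul_zero, Nat.add_zero]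
    set m := n / 2 ^ (a + 2) with hm
    have hnm : n = 2 ^ a + m * 2 ^ (a + 2) := by
      have hdm : 2 ^ (a + 2) * m + n % 2 ^ (a + 2) = n := by
        rw [hm]; exact Nat.div_add_mod n (2 ^ (a + 2))
      rw [hmod2, Nat.mul_comm] at hdm
      omega
    have hm0 : m ≠ 0 := by
      intro h0
      rw [h0, Nat.zero_mul, Nat.add_zero] at hnm
      exact hnp ⟨a, hnm⟩
    set L := Nat.log 2 m with hL
    have hLle : 2 ^ L ≤ m := Nat.pow_log_le_self 2 hm0
    have hLlt : m < 2 ^ (L + 1) := Nat.lt_pow_succ_log_self one_lt_two m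
    -- the set is the image of Iic L
    have hseteq : {p : ℕ × ℕ × ℕ | 1 ≤ p.1 ∧ 2 * p.1 ≤ p.2.2 ∧
        n = 2 ^ (2 * p.1 - 2) + p.2.1 * 2 ^ (2 * p.1) + 2 ^ p.2.2}
        = (fun t => (a / 2 + 1, m - 2 ^ t, a + 2 + t)) '' (Set.Iic L) := by
      ext ⟨j, k, ℓ⟩
      simp only [Set.mem_setOf_eq, Set.mem_image, Set.mem_Iic, Prod.mk.injEq]
      constructor
      · rintro ⟨hj, hℓ, hne⟩
        have hval : a = 2 * j - 2 := (key j k ℓ ⟨hj, hℓ, hne⟩).1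
        have h2j : 2 * j = a + 2 := by omega
        obtain ⟨t, rfl⟩ : ∃ t, ℓ = a + 2 + t := ⟨ℓ - (a + 2), by omega⟩
        have h2 : 2 * j - 2 = a := by omega
        rw [h2, h2j] at hne
        have hsum : (k + 2 ^ t) * 2 ^ (a + 2) = m * 2 ^ (a + 2) := by
          have hd : (k + 2 ^ t) * 2 ^ (a + 2)
              = k * 2 ^ (a + 2) + 2 ^ t * 2 ^ (a + 2) := by ring
          have hpow : (2 : ℕ) ^ (a + 2 + t) = 2 ^ t * 2 ^ (a + 2) := by ring
          rw [hpow] at hne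
          omega
        have hkm : k + 2 ^ t = m :=
          Nat.eq_of_mul_eq_mul_right (by positivity) hsum
        have htL : t ≤ L := by
          rw [hL, Nat.le_log_iff_pow_le one_lt_two hm0]
          omega
        exact ⟨t, htL, by omega, by omega, rfl⟩
      · rintro ⟨t, htL, hj, hk, hℓ⟩
        have h2t : 2 ^ t ≤ m := le_trans (Nat.pow_le_pow_right (by norm_num) htL) hLle
        have hje2 : 2 * j - 2 = a := by omega
        have hje : 2 * j = a + 2 := by omega
        refine ⟨by omega, by omega, ?_⟩
        rw [hje2, hje, ← hℓ, ← hk]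
        have hsub : m - 2 ^ t + 2 ^ t = m := Nat.sub_add_cancel h2t
        calc n = 2 ^ a + m * 2 ^ (a + 2) := hnm
          _ = 2 ^ a + (m - 2 ^ t + 2 ^ t) * 2 ^ (a + 2) := by rw [hsub]
          _ = 2 ^ a + (m - 2 ^ t) * 2 ^ (a + 2) + 2 ^ (a + 2 + t) := by ring
    rw [hseteq]
    have hinj : Function.Injective (fun t : ℕ => (a / 2 + 1, m - 2 ^ t, a + 2 + t)) := by
      intro x y h
      simp only [Prod.mk.injEq] at h
      omega
    rw [Set.ncard_image_of_injective _ hinj, ← Finset.coe_Iic, Set.ncard_coe_finset,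
      Nat.card_Iic]
    -- compute log 2 n
    have hlogn : Nat.log 2 n = a + 2 + L := by
      apply Nat.log_eq_of_pow_le_of_lt_pow
      · calc 2 ^ (a + 2 + L) = 2 ^ L * 2 ^ (a + 2) := by ring
          _ ≤ m * 2 ^ (a + 2) := Nat.mul_le_mul_right _ hLle
          _ ≤ n := by omega
      · have h1 : n < (m + 1) * 2 ^ (a + 2) := by
          have hlt : (2 : ℕ) ^ a < 2 ^ (a + 2) := by
            apply Nat.pow_lt_pow_right one_lt_two; omega
          calc n = 2 ^ a + m * 2 ^ (a + 2) := hnm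
            _ < 2 ^ (a + 2) + m * 2 ^ (a + 2) := by omega
            _ = (m + 1) * 2 ^ (a + 2) := by ring
        calc n < (m + 1) * 2 ^ (a + 2) := h1
          _ ≤ 2 ^ (L + 1) * 2 ^ (a + 2) := Nat.mul_le_mul_right _ (by omega)
          _ = 2 ^ (a + 2 + L + 1) := by ring
    rw [hlogn]
    push_cast
    ring
  · rw [if_neg hC]
    have hempty : {p : ℕ × ℕ × ℕ | 1 ≤ p.1 ∧ 2 * p.1 ≤ p.2.2 ∧
        n = 2 ^ (2 * p.1 - 2) + p.2.1 * 2 ^ (2 * p.1) + 2 ^ p.2.2} = ∅ := by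
      rw [Set.eq_empty_iff_forall_notMem]
      rintro ⟨j, k, ℓ⟩ ⟨hj, hℓ, hne⟩
      obtain ⟨hval, hbit, hnp⟩ := key j k ℓ ⟨hj, hℓ, hne⟩
      exact hC ⟨by omega, hbit, hnp⟩
    rw [hempty, Set.ncard_empty]
    norm_num
end

section
/- For every integer n ≥ 2 with binary expansion n = Σ_{i=a}^{e} n_i·2^i (n_a ≠ 0 ≠ n_e), the number of triples (j,k,ℓ) with j ≥ 1, k ≥ 0, ℓ ≥ 2j, and n = 2^{2j−2} + 2^{2j−1} + k·2^{2j} + 2^ℓ equals e − 2j + 1 when a = 2j−2 is even and n_{a+1} = 1; otherwise it equals 0. -/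
/-- Lemma S3: count of triples (j,k,ℓ) with j ≥ 1, k ≥ 0, ℓ ≥ 2j and
n = 2^{2j−2} + 2^{2j−1} + k·2^{2j} + 2^ℓ. -/
theorem stmt2 (n : ℕ) (hn : 2 ≤ n) :
    ({p : ℕ × ℕ × ℕ | 1 ≤ p.1 ∧ 2 * p.1 ≤ p.2.2 ∧
        n = 2 ^ (2 * p.1 - 2) + 2 ^ (2 * p.1 - 1) + p.2.1 * 2 ^ (2 * p.1)
            + 2 ^ p.2.2}.ncard : ℤ) =
      if padicValNat 2 n % 2 = 0 ∧ n.testBit (padicValNat 2 n + 1) = true then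
        (Nat.log 2 n : ℤ) - padicValNat 2 n - 1
      else 0 := by
  have hn0 : n ≠ 0 := by omega
  haveI : Fact (Nat.Prime 2) := ⟨Nat.prime_two⟩
  set a := padicValNat 2 n with ha
  obtain ⟨u, hu⟩ : 2 ^ a ∣ n := pow_padicValNat_dvd
  have hu0 : u ≠ 0 := by rintro rfl; rw [mul_zero] at hu; exact hn0 hu
  have hu_odd : u % 2 = 1 := by
    rcases Nat.even_or_odd u with he | ho
    · exfalso
      obtain ⟨v, hv⟩ := he
      have hd : 2 ^ (a + 1) ∣ n := ⟨v, by rw [hu, hv]; ring⟩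
      exact pow_succ_padicValNat_not_dvd hn0 hd
    · exact Nat.odd_iff.mp ho
  -- testBit characterization
  have htb : n.testBit (a + 1) = true ↔ u % 4 = 3 := by
    have hdiv : n / 2 ^ (a + 1) = u / 2 := by
      rw [hu, pow_succ, Nat.mul_comm (2 ^ a) 2, Nat.mul_comm (2 ^ a) u,
        Nat.mul_div_mul_right _ _ (Nat.pow_pos (by norm_num))]
    rw [Nat.testBit_eq_decide_div_mod_eq, hdiv]
    simp only [decide_eq_true_eq]
    omega
  -- key structural lemma about members of the set
  have key : ∀ j k ℓ : ℕ, 1 ≤ j → 2 * j ≤ ℓ →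
      n = 2 ^ (2 * j - 2) + 2 ^ (2 * j - 1) + k * 2 ^ (2 * j) + 2 ^ ℓ →
      a = 2 * j - 2 ∧ u = 3 + 4 * k + 2 ^ (ℓ - 2 * j + 2) := by
    intro j k ℓ hj hℓ heq
    obtain ⟨j', rfl⟩ : ∃ j', j = j' + 1 := ⟨j - 1, by omega⟩
    obtain ⟨t, rfl⟩ : ∃ t, ℓ = 2 * (j' + 1) + t := ⟨ℓ - 2 * (j' + 1), by omega⟩
    have e1 : 2 * (j' + 1) - 2 = 2 * j' := by omega
    have e2 : 2 * (j' + 1) - 1 = 2 * j' + 1 := by omega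
    have e3 : 2 * (j' + 1) + t - 2 * (j' + 1) + 2 = t + 2 := by omega
    rw [e1, e2] at heq
    rw [e3]
    have hv : n = 2 ^ (2 * j') * (3 + 4 * k + 2 ^ (t + 2)) := by
      rw [heq]; ring
    have hodd : ¬ (2 ∣ (3 + 4 * k + 2 ^ (t + 2))) := by
      have : 2 ∣ 2 ^ (t + 2) := dvd_pow_self 2 (by omega)
      omega
    have has : a = 2 * j' := by
      rw [ha, hv, padicValNat.mul (by positivity) (by
        intro h; rw [h] at hodd; simp at hodd),
        padicValNat.prime_pow, padicValNat.eq_zero_of_not_dvd hodd]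
      omega
    refine ⟨has, ?_⟩
    have h5 := hu
    rw [hv, has] at h5
    exact (Nat.eq_of_mul_eq_mul_left (by positivity) h5.symm)
  by_cases hC : a % 2 = 0 ∧ n.testBit (a + 1) = true
  · rw [if_pos hC]
    have hu4 : u % 4 = 3 := htb.mp hC.2
    set m := u / 4 with hm
    have hum : u = 4 * m + 3 := by omega
    by_cases hm0 : m = 0
    · -- n = 3 * 2^a, set is empty
      have hempty : {p : ℕ × ℕ × ℕ | 1 ≤ p.1 ∧ 2 * p.1 ≤ p.2.2 ∧
          n = 2 ^ (2 * p.1 - 2) + 2 ^ (2 * p.1 - 1) + p.2.1 * 2 ^ (2 * p.1)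
              + 2 ^ p.2.2} = ∅ := by
        ext ⟨j, k, ℓ⟩
        simp only [Set.mem_setOf_eq, Set.mem_empty_iff_false, iff_false, not_and]
        intro hj hℓ heq
        have := (key j k ℓ hj hℓ heq).2
        have h2 : (1:ℕ) ≤ 2 ^ (ℓ - 2 * j + 2) := Nat.one_le_two_pow
        omega
      rw [hempty]
      have hlog : Nat.log 2 n = a + 1 := by
        apply Nat.log_eq_of_pow_le_of_lt_pow
        · rw [hu, hum, hm0]; rw [pow_succ]; nlinarith [(Nat.pow_pos (show 0 < 2 by norm_num) : 0 < 2 ^ a)]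
        · rw [hu, hum, hm0]
          have : 2 ^ (a + 1 + 1) = 2 ^ a * 4 := by ring
          rw [this]
          have : 0 < 2 ^ a := Nat.pow_pos (by norm_num)
          nlinarith
      rw [hlog]
      simp
    · -- main case: m ≥ 1
      have hm1 : 1 ≤ m := by omega
      set T := Nat.log 2 m with hT
      have ha2 : a % 2 = 0 := hC.1
      set f : ℕ → ℕ × ℕ × ℕ := fun t => (a / 2 + 1, m - 2 ^ t, a + 2 + t) with hf
      have hset : {p : ℕ × ℕ × ℕ | 1 ≤ p.1 ∧ 2 * p.1 ≤ p.2.2 ∧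
          n = 2 ^ (2 * p.1 - 2) + 2 ^ (2 * p.1 - 1) + p.2.1 * 2 ^ (2 * p.1)
              + 2 ^ p.2.2} = f '' (Set.Iic T) := by
        ext ⟨j, k, ℓ⟩
        simp only [Set.mem_setOf_eq, Set.mem_image, Set.mem_Iic, hf, Prod.mk.injEq]
        constructor
        · rintro ⟨hj, hℓ, heq⟩
          obtain ⟨haj, huj⟩ := key j k ℓ hj hℓ heq
          refine ⟨ℓ - 2 * j, ?_, by omega, ?_, by omega⟩
          · rw [Nat.le_log_iff_pow_le (by norm_num) hm0]
            have h4 : 2 ^ (ℓ - 2 * j + 2) = 4 * 2 ^ (ℓ - 2 * j) := by ring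
            omega
          · have h4 : 2 ^ (ℓ - 2 * j + 2) = 4 * 2 ^ (ℓ - 2 * j) := by ring
            omega
        · rintro ⟨t, ht, hj, hk, hℓ⟩
          have hpow : 2 ^ t ≤ m := (Nat.le_log_iff_pow_le (by norm_num) hm0).mp ht
          refine ⟨by omega, by omega, ?_⟩
          have hj2 : 2 * j - 2 = a := by omega
          have hj1 : 2 * j - 1 = a + 1 := by omega
          have hj0 : 2 * j = a + 2 := by omega
          rw [hj2, hj1, hj0, ← hℓ, ← hk, hu, hum]
          have hsub : (m - 2 ^ t) * 2 ^ (a + 2) + 2 ^ (a + 2 + t)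
              = m * 2 ^ (a + 2) := by
            have h3 : 2 ^ (a + 2 + t) = 2 ^ t * 2 ^ (a + 2) := by ring
            rw [Nat.sub_mul, h3]
            exact Nat.sub_add_cancel (Nat.mul_le_mul_right _ hpow)
          calc 2 ^ a * (4 * m + 3) = 2 ^ a + 2 ^ (a + 1) + m * 2 ^ (a + 2) := by
                ring
            _ = 2 ^ a + 2 ^ (a + 1)
                + ((m - 2 ^ t) * 2 ^ (a + 2) + 2 ^ (a + 2 + t)) := by rw [hsub]
            _ = 2 ^ a + 2 ^ (a + 1) + (m - 2 ^ t) * 2 ^ (a + 2)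
                + 2 ^ (a + 2 + t) := by ring
      rw [hset]
      have hinj : Function.Injective f := by
        intro s t hst
        simp only [hf, Prod.mk.injEq] at hst
        omega
      rw [Set.ncard_image_of_injective _ hinj, ← Finset.coe_Iic,
        Set.ncard_coe_finset, Nat.card_Iic]
      have hlog : Nat.log 2 n = a + 2 + T := by
        apply Nat.log_eq_of_pow_le_of_lt_pow
        · calc 2 ^ (a + 2 + T) = 2 ^ T * 2 ^ (a + 2) := by ring
          _ ≤ m * 2 ^ (a + 2) := Nat.mul_le_mul_right _
              (Nat.pow_log_le_self 2 hm0)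
          _ ≤ n := by
              rw [hu, hum]
              calc m * 2 ^ (a + 2) = 2 ^ a * (4 * m) := by ring
                _ ≤ 2 ^ a * (4 * m + 3) := Nat.mul_le_mul_left _ (by omega)
        · have hmlt : m < 2 ^ (T + 1) := Nat.lt_pow_succ_log_self (by norm_num) m
          calc n = 2 ^ a * (4 * m + 3) := by rw [hu, hum]
          _ < 2 ^ a * (8 * 2 ^ T) := by
              have h8 : 4 * m + 3 < 8 * 2 ^ T := by
                have : 2 ^ (T + 1) = 2 * 2 ^ T := by ring
                omega
              exact mul_lt_mul_of_pos_left h8 (by positivity)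
          _ = 2 ^ (a + 2 + T + 1) := by ring
      rw [hlog]
      push_cast
      ring
  · rw [if_neg hC]
    have hempty : {p : ℕ × ℕ × ℕ | 1 ≤ p.1 ∧ 2 * p.1 ≤ p.2.2 ∧
        n = 2 ^ (2 * p.1 - 2) + 2 ^ (2 * p.1 - 1) + p.2.1 * 2 ^ (2 * p.1)
            + 2 ^ p.2.2} = ∅ := by
      ext ⟨j, k, ℓ⟩
      simp only [Set.mem_setOf_eq, Set.mem_empty_iff_false, iff_false, not_and]
      intro hj hℓ heq
      obtain ⟨haj, huj⟩ := key j k ℓ hj hℓ heq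
      apply hC
      constructor
      · omega
      · rw [htb]
        have h4 : 2 ^ (ℓ - 2 * j + 2) = 4 * 2 ^ (ℓ - 2 * j) := by ring
        omega
    rw [hempty]
    simp
end

section
/- For every integer n ≥ 2 with binary expansion n = Σ_{i=a}^{e} n_i·2^i (n_a ≠ 0 ≠ n_e), the number of triples (s,k,ℓ) with s ≥ 1, k ≥ 0, ℓ ≥ 2s, and n = 2^{2s−1} + k·2^{2s} + 2^ℓ equals e − 2s + 1 when a = 2s−1 is odd and n is not a power of 2; otherwise it equals 0. -/
open Classical

lemma val2_aux (t k j : ℕ) (hj : 1 ≤ j) :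
    padicValNat 2 (2 ^ t * (1 + 2 * k + 2 ^ j)) = t := by
  have : Fact (Nat.Prime 2) := ⟨Nat.prime_two⟩
  have hodd : ¬ 2 ∣ (1 + 2 * k + 2 ^ j) := by
    obtain ⟨j', rfl⟩ : ∃ j', j = j' + 1 := ⟨j - 1, by omega⟩
    rw [pow_succ]
    omega
  rw [padicValNat.mul (by positivity) (by positivity),
      padicValNat.prime_pow, padicValNat.eq_zero_of_not_dvd hodd]
  omega

/-- Lemma S5: count of triples (s,k,ℓ) with s ≥ 1, k ≥ 0, ℓ ≥ 2s and
n = 2^{2s−1} + k·2^{2s} + 2^ℓ; equals e − 2s + 1 = e − a when a = 2s−1 is odd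
and n is not a power of 2, and 0 otherwise. -/

theorem stmt3 (n : ℕ) (hn : 2 ≤ n) :
    ({p : ℕ × ℕ × ℕ | 1 ≤ p.1 ∧ 2 * p.1 ≤ p.2.2 ∧
        n = 2 ^ (2 * p.1 - 1) + p.2.1 * 2 ^ (2 * p.1) + 2 ^ p.2.2}.ncard : ℤ) =
      if padicValNat 2 n % 2 = 1 ∧ ¬∃ c : ℕ, n = 2 ^ c then
        (Nat.log 2 n : ℤ) - padicValNat 2 n
      else 0 := by
  have : Fact (Nat.Prime 2) := ⟨Nat.prime_two⟩
  set a := padicValNat 2 n with ha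
  -- Any member forces the condition
  have hmem : ∀ p : ℕ × ℕ × ℕ, (1 ≤ p.1 ∧ 2 * p.1 ≤ p.2.2 ∧
      n = 2 ^ (2 * p.1 - 1) + p.2.1 * 2 ^ (2 * p.1) + 2 ^ p.2.2) →
      a = 2 * p.1 - 1 ∧ (¬∃ c : ℕ, n = 2 ^ c) ∧
        n = 2 ^ (2 * p.1 - 1) * (1 + 2 * p.2.1 + 2 ^ (p.2.2 - (2 * p.1 - 1))) := by
    rintro ⟨s, k, l⟩ ⟨h1, h2, h3⟩
    dsimp only at h1 h2 h3 ⊢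
    obtain ⟨b, hb1, hb2⟩ : ∃ b, 2 * s - 1 = b ∧ 2 * s = b + 1 :=
      ⟨2 * s - 1, rfl, by omega⟩
    set j := l - (2 * s - 1) with hjdef
    have hj1 : 1 ≤ j := by omega
    have hl : l = b + j := by omega
    have hfac : n = 2 ^ b * (1 + 2 * k + 2 ^ j) := by
      rw [h3, hl, hb1, hb2, pow_add, pow_succ]
      ring
    have hval : a = b := by rw [ha, hfac, val2_aux _ _ _ hj1]
    have hjl : l - (2 * s - 1) = j := rfl
    refine ⟨by omega, ?_, by rw [hb1]; exact hfac⟩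
    rintro ⟨c, hc⟩
    have hcs : b < c := by
      by_contra hcs
      have h1' : 2 ^ c ≤ 2 ^ b := Nat.pow_le_pow_right (by norm_num) (by omega)
      have h2' : 2 ^ b < 2 ^ b * (1 + 2 * k + 2 ^ j) := by
        have hge : 2 ≤ 1 + 2 * k + 2 ^ j := by
          have := Nat.one_le_two_pow (n := j); omega
        have hp : 0 < 2 ^ b := by positivity
        nlinarith
      omega
    have hsplit : 2 ^ c = 2 ^ b * 2 ^ (c - b) := by
      rw [← pow_add]; congr 1; omega
    rw [hc, hsplit] at hfac
    have heq : 2 ^ (c - b) = 1 + 2 * k + 2 ^ j := by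
      have hpos : 0 < 2 ^ b := by positivity
      exact Nat.eq_of_mul_eq_mul_left hpos hfac
    obtain ⟨c', hc'⟩ : ∃ c', c - b = c' + 1 := ⟨c - b - 1, by omega⟩
    obtain ⟨j', hj'⟩ : ∃ j', j = j' + 1 := ⟨j - 1, by omega⟩
    rw [hc', hj', pow_succ, pow_succ] at heq
    omega
  by_cases hcond : a % 2 = 1 ∧ ¬∃ c : ℕ, n = 2 ^ c
  · rw [if_pos hcond]
    obtain ⟨hodd, hnp⟩ := hcond
    have ha1 : 1 ≤ a := by omega
    have hdvd : 2 ^ a ∣ n := pow_padicValNat_dvd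
    obtain ⟨m, hnm⟩ : ∃ m, n = 2 ^ a * m := hdvd
    have hnd : ¬ 2 ^ (a + 1) ∣ n := by
      rw [ha]; exact pow_succ_padicValNat_not_dvd (by omega)
    have hm_odd : m % 2 = 1 := by
      rcases Nat.even_or_odd m with ⟨m', hm'⟩ | ho
      · exact absurd ⟨m', by rw [hnm, hm', pow_succ]; ring⟩ hnd
      · exact Nat.odd_iff.mp ho
    have hm3 : 3 ≤ m := by
      have hm1 : m ≠ 1 := by
        intro h1
        exact hnp ⟨a, by rw [hnm, h1, mul_one]⟩
      omega
    set L := Nat.log 2 (m - 1) with hL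
    -- the set is the image of Icc 1 L
    have hset : {p : ℕ × ℕ × ℕ | 1 ≤ p.1 ∧ 2 * p.1 ≤ p.2.2 ∧
        n = 2 ^ (2 * p.1 - 1) + p.2.1 * 2 ^ (2 * p.1) + 2 ^ p.2.2} =
        (fun j => ((a + 1) / 2, ((m - 1 - 2 ^ j) / 2, a + j))) '' Set.Icc 1 L := by
      ext ⟨s, k, l⟩
      simp only [Set.mem_setOf_eq, Set.mem_image, Set.mem_Icc, Prod.mk.injEq]
      constructor
      · rintro ⟨h1, h2, h3⟩
        obtain ⟨hval, -, hfac⟩ := hmem ⟨s, k, l⟩ ⟨h1, h2, h3⟩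
        dsimp only at hval hfac
        obtain ⟨j, hjdef⟩ : ∃ j, l - (2 * s - 1) = j := ⟨_, rfl⟩
        rw [hjdef] at hfac
        have hj1 : 1 ≤ j := by omega
        have hmeq : m = 1 + 2 * k + 2 ^ j := by
          have hpos : 0 < 2 ^ a := by positivity
          have heq2 : 2 ^ a * m = 2 ^ a * (1 + 2 * k + 2 ^ j) := by
            rw [← hnm, hfac, hval]
          exact Nat.eq_of_mul_eq_mul_left hpos heq2
        have hjle : j ≤ L := by
          rw [hL, Nat.le_log_iff_pow_le (by norm_num) (by omega)]
          omega
        refine ⟨j, ⟨hj1, hjle⟩, by omega, by omega, by omega⟩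
      · rintro ⟨j, ⟨hj1, hjL⟩, hs, hk, hl⟩
        have hpow : 2 ^ j ≤ m - 1 := by
          calc 2 ^ j ≤ 2 ^ L := Nat.pow_le_pow_right (by norm_num) hjL
          _ ≤ m - 1 := Nat.pow_log_le_self 2 (by omega)
        have h2j : 2 ∣ 2 ^ j := dvd_pow_self 2 (by omega)
        obtain ⟨t, ht⟩ := h2j
        have hkval : 2 * k = m - 1 - 2 ^ j := by omega
        refine ⟨by omega, by omega, ?_⟩
        have hmeq : m = 1 + 2 * k + 2 ^ j := by omega
        have h2s1 : 2 * s - 1 = a := by omega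
        have h2s : 2 * s = a + 1 := by omega
        rw [hnm, ← hl, h2s1, h2s, hmeq, pow_add, pow_succ]
        ring
    rw [hset]
    have hinj : Set.InjOn (fun j => ((a + 1) / 2, ((m - 1 - 2 ^ j) / 2, a + j)))
        (Set.Icc 1 L) := by
      intro x hx y hy hxy
      simp only [Prod.mk.injEq] at hxy
      omega
    rw [Set.ncard_image_of_injOn hinj]
    have hicc : (Set.Icc 1 L).ncard = L := by
      rw [← Nat.card_coe_set_eq, Nat.card_eq_card_toFinset]
      simp [Nat.card_Icc]
    rw [hicc]
    -- now show (L : ℤ) = log 2 n - a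
    have hLm : Nat.log 2 m = L := by
      have hLm1 : 1 ≤ Nat.log 2 m := by
        rw [Nat.le_log_iff_pow_le (by norm_num) (by omega)]; omega
      have h1 : 2 ^ Nat.log 2 m ≤ m := Nat.pow_log_le_self 2 (by omega)
      have h2 : m < 2 ^ (Nat.log 2 m + 1) := Nat.lt_pow_succ_log_self (by norm_num) m
      have hne : m ≠ 2 ^ Nat.log 2 m := by
        intro h
        have : 2 ∣ 2 ^ Nat.log 2 m := dvd_pow_self 2 (by omega)
        omega
      rw [hL]
      exact (Nat.log_eq_of_pow_le_of_lt_pow (by omega) (by omega)).symm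
    have hlogn : Nat.log 2 n = a + Nat.log 2 m := by
      apply Nat.log_eq_of_pow_le_of_lt_pow
      · rw [hnm, pow_add]
        exact Nat.mul_le_mul_left _ (Nat.pow_log_le_self 2 (by omega))
      · rw [hnm]
        have h2 : m < 2 ^ (Nat.log 2 m + 1) := Nat.lt_pow_succ_log_self (by norm_num) m
        calc 2 ^ a * m < 2 ^ a * 2 ^ (Nat.log 2 m + 1) := by
              have hp : 0 < 2 ^ a := by positivity
              exact (Nat.mul_lt_mul_left hp).mpr h2
        _ = 2 ^ (a + Nat.log 2 m + 1) := by rw [← pow_add]; ring_nf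
    rw [hlogn, hLm]
    push_cast
    ring
  · rw [if_neg hcond]
    have hempty : {p : ℕ × ℕ × ℕ | 1 ≤ p.1 ∧ 2 * p.1 ≤ p.2.2 ∧
        n = 2 ^ (2 * p.1 - 1) + p.2.1 * 2 ^ (2 * p.1) + 2 ^ p.2.2} = ∅ := by
      ext p
      simp only [Set.mem_setOf_eq, Set.mem_empty_iff_false, iff_false]
      intro hp
      obtain ⟨hval, hnp, -⟩ := hmem p hp
      apply hcond
      refine ⟨?_, hnp⟩
      have := hp.1
      omega
    rw [hempty]
    simp
end

section
/- For fixed integers s ≥ 1, t > s, k_3 ≥ 0, and n with n ≥ 2^{2t−1+k_3} and 2^{2s−2} dividing n − 2^{2t−1+k_3} appropriately, the number of k_2 ≥ 0 such that n − (2k_2+1)·2^{2t−2} − 2^{2t−1+k_3} is a positive odd multiple of 2^{2s−2} (i.e., equals (2k_1+1)·2^{2s−2} for some k_1 ≥ 0) is ⌊n/2^{2t−1} + 1/2⌋ − 2^{k_3}, provided v_2(n) = 2s−2. -/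
/-- Inner counting step of Lemma S4: for fixed s,t,k₃, the number of k₂ with
n = (2k₁+1)·2^{2s−2} + (2k₂+1)·2^{2t−2} + 2^{2t−1+k₃} (for some k₁ ≥ 0)
equals ⌊n/2^{2t−1} + 1/2⌋ − 2^{k₃}, provided v₂(n) = 2s−2. -/
theorem stmt6 (n s t k3 : ℕ) (hs : 1 ≤ s) (hst : s < t)
    (hn : 2 ^ (2 * t - 1 + k3) ≤ n) (ha : padicValNat 2 n = 2 * s - 2) :
    ({k2 : ℕ | ∃ k1 : ℕ,
        n = (2 * k1 + 1) * 2 ^ (2 * s - 2) + (2 * k2 + 1) * 2 ^ (2 * t - 2)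
            + 2 ^ (2 * t - 1 + k3)}.ncard : ℤ) =
      (((n + 2 ^ (2 * t - 2)) / 2 ^ (2 * t - 1) : ℕ) : ℤ) - 2 ^ k3 := by
  have fact2 : Fact (Nat.Prime 2) := ⟨Nat.prime_two⟩
  set a := 2 * s - 2 with haa
  set d := 2 * t - 2 with hdd
  have had : a + 2 ≤ d := by omega
  have h2t1 : 2 * t - 1 = d + 1 := by omega
  set E := 2 ^ (2 * t - 1 + k3) with hE
  have hn0 : n ≠ 0 := by
    have : 0 < E := Nat.pow_pos (by norm_num)
    omega
  have h1 : 2 ^ a ∣ n := ha ▸ pow_padicValNat_dvd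
  have h2 : ¬ 2 ^ (a + 1) ∣ n := by
    have := pow_succ_padicValNat_not_dvd (p := 2) hn0
    rwa [ha] at this
  have hEdvd : 2 ^ (a + 1) ∣ E := pow_dvd_pow 2 (by omega)
  set m := n - E with hm
  have hmn : n = m + E := (Nat.sub_add_cancel hn).symm
  have hm1 : 2 ^ a ∣ m := Nat.dvd_sub h1 (dvd_trans (pow_dvd_pow 2 (by omega)) hEdvd)
  have hm2 : ¬ 2 ^ (a + 1) ∣ m := fun h => h2 (hmn ▸ Nat.dvd_add h hEdvd)
  set q := m / 2 ^ d with hq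
  have hdpos : (0:ℕ) < 2 ^ d := Nat.pow_pos (by norm_num)
  -- set equality
  have hset : {k2 : ℕ | ∃ k1 : ℕ,
      n = (2 * k1 + 1) * 2 ^ a + (2 * k2 + 1) * 2 ^ d + E} = Set.Iio ((q + 1) / 2) := by
    ext k2
    simp only [Set.mem_setOf_eq, Set.mem_Iio]
    constructor
    · rintro ⟨k1, hk1⟩
      have hle : (2 * k2 + 1) * 2 ^ d ≤ m := by omega
      have : 2 * k2 + 1 ≤ q := (Nat.le_div_iff_mul_le hdpos).2 hle
      omega
    · intro hk
      have hq1 : 2 * k2 + 1 ≤ q := by omega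
      have hle : (2 * k2 + 1) * 2 ^ d ≤ m := (Nat.le_div_iff_mul_le hdpos).1 hq1
      set r := m - (2 * k2 + 1) * 2 ^ d with hr
      have hrm : m = r + (2 * k2 + 1) * 2 ^ d := by omega
      have hddvd : 2 ^ (a + 1) ∣ (2 * k2 + 1) * 2 ^ d :=
        Dvd.dvd.mul_left (pow_dvd_pow 2 (by omega)) _
      have hr1 : 2 ^ a ∣ r := Nat.dvd_sub hm1 (dvd_trans (pow_dvd_pow 2 (by omega)) hddvd)
      have hr2 : ¬ 2 ^ (a + 1) ∣ r := fun h => hm2 (hrm ▸ Nat.dvd_add h hddvd)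
      obtain ⟨w, hw⟩ := hr1
      have hwodd : ¬ 2 ∣ w := by
        rintro ⟨v, rfl⟩
        exact hr2 ⟨v, by rw [hw]; ring⟩
      obtain ⟨k1, hk1⟩ : ∃ k1, w = 2 * k1 + 1 := ⟨w / 2, by omega⟩
      exact ⟨k1, by rw [hmn, hrm, hw, hk1]; ring⟩
  rw [hset]
  have hcard : (Set.Iio ((q + 1) / 2)).ncard = (q + 1) / 2 := by
    rw [← Finset.coe_Iio, Set.ncard_coe_finset, Nat.card_Iio]
  rw [hcard]
  -- arithmetic on RHS
  have hEeq : E = 2 ^ (d + 1) * 2 ^ k3 := by rw [hE, h2t1, pow_add]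
  have harith : (n + 2 ^ d) / 2 ^ (2 * t - 1) = (q + 1) / 2 + 2 ^ k3 := by
    rw [h2t1, hmn, hEeq]
    have h1' : (m + 2 ^ (d + 1) * 2 ^ k3 + 2 ^ d) = (m + 2 ^ d) + 2 ^ (d + 1) * 2 ^ k3 := by
      ring
    rw [h1', Nat.add_mul_div_left _ _ (Nat.pow_pos (by norm_num))]
    congr 1
    rw [pow_succ, ← Nat.div_div_eq_div_mul, Nat.add_div_right _ hdpos]
  rw [harith]
  push_cast
  ring
end

section
/- Let u(n) denote the number of unique path partitions of n, with generating function Σ_{n≥1} u(n)q^n = 2·Σ_{i≥1} q^{2^i−1}(1+q^{2^{i−1}})·Π_{j=0}^{i−2} 1/(1−q^{2^j}). Then u(n) is even for all n ≥ 1, and u(2n) = u(2n−1) for all n ≥ 1. -/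
open PowerSeries Finset

/-- The i-th summand of the generating function of unique path partitions:
2·q^{2^i−1}(1+q^{2^{i−1}})·∏_{j=0}^{i−2} 1/(1−q^{2^j}). -/
noncomputable def Useries (i : ℕ) : PowerSeries ℤ :=
  2 * PowerSeries.X ^ (2 ^ i - 1) * (1 + PowerSeries.X ^ (2 ^ (i - 1))) *
    ∏ j ∈ Finset.range (i - 1),
      ((1 - PowerSeries.X ^ (2 ^ j) : PowerSeries ℤ).invOfUnit 1)

/-- A power series supported on even exponents. -/
def Ev (φ : PowerSeries ℤ) : Prop := ∀ m, Odd m → PowerSeries.coeff m φ = 0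

lemma Ev_mul {φ ψ : PowerSeries ℤ} (hφ : Ev φ) (hψ : Ev ψ) : Ev (φ * ψ) := by
  intro m hm
  rw [coeff_mul]
  apply Finset.sum_eq_zero
  intro p hp
  rw [Finset.HasAntidiagonal.mem_antidiagonal] at hp
  rcases Nat.even_or_odd p.1 with h1 | h1
  · have h2 : Odd p.2 := by
      rw [Nat.odd_iff] at hm ⊢; rw [Nat.even_iff] at h1; omega
    rw [hψ p.2 h2, mul_zero]
  · rw [hφ p.1 h1, zero_mul]

lemma Ev_one : Ev (1 : PowerSeries ℤ) := by
  intro m hm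
  have : m ≠ 0 := by rw [Nat.odd_iff] at hm; omega
  simp [coeff_one, this]

lemma Ev_C (a : ℤ) : Ev (PowerSeries.C a) := by
  intro m hm
  have : m ≠ 0 := by rw [Nat.odd_iff] at hm; omega
  rw [PowerSeries.coeff_C, if_neg this]

lemma Ev_X_pow {e : ℕ} (he : Even e) : Ev (PowerSeries.X ^ e : PowerSeries ℤ) := by
  intro m hm
  rw [coeff_X_pow, if_neg]
  rintro rfl
  rw [Nat.odd_iff] at hm; rw [Nat.even_iff] at he; omega

lemma Ev_add {φ ψ : PowerSeries ℤ} (hφ : Ev φ) (hψ : Ev ψ) : Ev (φ + ψ) := by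
  intro m hm; rw [map_add, hφ m hm, hψ m hm, add_zero]

lemma Ev_sub {φ ψ : PowerSeries ℤ} (hφ : Ev φ) (hψ : Ev ψ) : Ev (φ - ψ) := by
  intro m hm; rw [map_sub, hφ m hm, hψ m hm, sub_zero]

lemma Ev_invOfUnit {φ : PowerSeries ℤ} (h : Ev φ) : Ev (φ.invOfUnit 1) := by
  intro m
  induction m using Nat.strong_induction_on with
  | _ m ih =>
    intro hm
    have hm0 : m ≠ 0 := by rw [Nat.odd_iff] at hm; omega
    rw [coeff_invOfUnit, if_neg hm0]
    have : (∑ x ∈ antidiagonal m,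
        if x.2 < m then coeff x.1 φ * coeff x.2 (φ.invOfUnit 1) else 0) = 0 := by
      apply Finset.sum_eq_zero
      intro p hp
      rw [Finset.HasAntidiagonal.mem_antidiagonal] at hp
      split_ifs with hlt
      · rcases Nat.even_or_odd p.1 with h1 | h1
        · have h2 : Odd p.2 := by
            rw [Nat.odd_iff] at hm ⊢; rw [Nat.even_iff] at h1; omega
          rw [ih p.2 hlt h2, mul_zero]
        · rw [h p.1 h1, zero_mul]
      · rfl
    rw [this, mul_zero]

lemma inv_shift : (1 - PowerSeries.X : PowerSeries ℤ).invOfUnit 1 =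
    (1 + PowerSeries.X) * (1 - PowerSeries.X ^ 2 : PowerSeries ℤ).invOfUnit 1 := by
  have h1 : (1 - PowerSeries.X : PowerSeries ℤ) *
      (1 - PowerSeries.X : PowerSeries ℤ).invOfUnit 1 = 1 :=
    mul_invOfUnit _ _ (by simp)
  have h2 : (1 - PowerSeries.X ^ 2 : PowerSeries ℤ) *
      (1 - PowerSeries.X ^ 2 : PowerSeries ℤ).invOfUnit 1 = 1 :=
    mul_invOfUnit _ _ (by simp)
  linear_combination ((1 + PowerSeries.X) * (1 - PowerSeries.X ^ 2 : PowerSeries ℤ).invOfUnit 1) * h1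
    - ((1 - PowerSeries.X : PowerSeries ℤ).invOfUnit 1) * h2

lemma key (i : ℕ) : ∃ G : PowerSeries ℤ,
    Useries (i + 1) = (PowerSeries.X + PowerSeries.X ^ 2) * G ∧ Ev G := by
  cases i with
  | zero =>
    refine ⟨PowerSeries.C 2, ?_, Ev_C 2⟩
    rw [Useries]
    norm_num
    ring
  | succ k =>
    set P : PowerSeries ℤ := ∏ j ∈ Finset.range k,
      ((1 - PowerSeries.X ^ (2 ^ (j + 1)) : PowerSeries ℤ).invOfUnit 1) with hP
    refine ⟨2 * PowerSeries.X ^ (2 ^ (k + 2) - 2) * (1 + PowerSeries.X ^ (2 ^ (k + 1))) *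
      ((1 - PowerSeries.X ^ 2 : PowerSeries ℤ).invOfUnit 1 * P), ?_, ?_⟩
    · rw [Useries]
      have hr : (k + 1 + 1) - 1 = k + 1 := rfl
      rw [hr, Finset.prod_range_succ']
      simp only [pow_zero, pow_one]
      rw [inv_shift]
      rw [show (2 : ℕ) ^ (k + 1 + 1) - 1 = (2 ^ (k + 2) - 2) + 1 by
        show 2 ^ (k + 2) - 1 = (2 ^ (k + 2) - 2) + 1
        have : 2 ≤ 2 ^ (k + 2) := Nat.one_lt_two_pow (by omega)
        generalize 2 ^ (k + 2) = e at *
        omega]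
      rw [pow_succ]
      ring
    · apply Ev_mul
      apply Ev_mul
      apply Ev_mul
      · rw [show (2 : PowerSeries ℤ) = PowerSeries.C 2 by simp]; exact Ev_C 2
      · exact Ev_X_pow ⟨2 ^ (k + 1) - 1, by
          have ha : 1 ≤ 2 ^ (k + 1) := Nat.one_le_two_pow
          have hb : 2 ^ (k + 2) = 2 * 2 ^ (k + 1) := by ring
          omega⟩
      · exact Ev_add Ev_one (Ev_X_pow ⟨2 ^ k, by ring⟩)
      · apply Ev_mul
        · exact Ev_invOfUnit (Ev_sub Ev_one (Ev_X_pow ⟨1, by ring⟩))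
        · rw [hP]
          apply Finset.prod_induction _ Ev (fun _ _ => Ev_mul) Ev_one
          intro j _
          exact Ev_invOfUnit (Ev_sub Ev_one (Ev_X_pow ⟨2 ^ j, by ring⟩))

lemma vanish (n i : ℕ) (h : n < 2 ^ (i + 1) - 1) :
    PowerSeries.coeff n (Useries (i + 1)) = 0 := by
  rw [show Useries (i + 1) = (2 * (1 + PowerSeries.X ^ (2 ^ ((i + 1) - 1))) *
      ∏ j ∈ Finset.range ((i + 1) - 1),
        ((1 - PowerSeries.X ^ (2 ^ j) : PowerSeries ℤ).invOfUnit 1)) *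
      PowerSeries.X ^ (2 ^ (i + 1) - 1) by rw [Useries]; ring]
  rw [coeff_mul_X_pow', if_neg (by omega)]

lemma two_dvd_coeff (n i : ℕ) : (2 : ℤ) ∣ PowerSeries.coeff n (Useries i) := by
  rw [show Useries i = PowerSeries.C 2 * (PowerSeries.X ^ (2 ^ i - 1) *
      ((1 + PowerSeries.X ^ (2 ^ (i - 1))) * ∏ j ∈ Finset.range (i - 1),
        ((1 - PowerSeries.X ^ (2 ^ j) : PowerSeries ℤ).invOfUnit 1))) by
    rw [Useries, show (PowerSeries.C 2 : PowerSeries ℤ) = 2 by simp]; ring]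
  rw [coeff_C_mul]
  exact Dvd.intro _ rfl

/-- If u(n) is the n-th coefficient of Σ_{i≥1} of the above summands, then
u(n) is even for all n ≥ 1 and u(2n) = u(2n−1) for all n ≥ 1. -/
theorem stmt7 (u : ℕ → ℤ)
    (hu : ∀ n : ℕ, u n = ∑' i : ℕ, PowerSeries.coeff n (Useries (i + 1))) :
    (∀ n, 1 ≤ n → 2 ∣ u n) ∧ (∀ n, 1 ≤ n → u (2 * n) = u (2 * n - 1)) := by
  have husum : ∀ n N : ℕ, n ≤ N →
      u n = ∑ i ∈ Finset.range N, PowerSeries.coeff n (Useries (i + 1)) := by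
    intro n N hn
    rw [hu]
    apply tsum_eq_sum
    intro i hi
    apply vanish
    have h1 : i + 1 < 2 ^ (i + 1) := Nat.lt_two_pow_self
    rw [Finset.mem_range, not_lt] at hi
    omega
  constructor
  · intro n hn
    rw [husum n n le_rfl]
    exact Finset.dvd_sum fun i _ => two_dvd_coeff n (i + 1)
  · intro n hn
    obtain ⟨m, rfl⟩ : ∃ m, n = m + 1 := ⟨n - 1, by omega⟩
    rw [husum (2 * (m + 1)) (2 * (m + 1)) le_rfl,
      husum (2 * (m + 1) - 1) (2 * (m + 1)) (by omega)]
    apply Finset.sum_congr rfl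
    intro i _
    obtain ⟨G, hG, hEv⟩ := key i
    rw [hG, show 2 * (m + 1) - 1 = 2 * m + 1 by omega, show 2 * (m + 1) = 2 * m + 2 by ring]
    rw [show (PowerSeries.X + PowerSeries.X ^ 2 : PowerSeries ℤ) * G
        = G * PowerSeries.X ^ 1 + G * PowerSeries.X ^ 2 by ring]
    simp only [map_add, coeff_mul_X_pow']
    rw [if_pos (by omega), if_pos (by omega), if_pos (by omega)]
    rw [show 2 * m + 2 - 1 = 2 * m + 1 by omega, show 2 * m + 2 - 2 = 2 * m by omega,
      show 2 * m + 1 - 1 = 2 * m by omega]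
    rw [hEv (2 * m + 1) (Nat.odd_iff.mpr (by omega))]
    rcases Nat.eq_zero_or_pos m with rfl | hm
    · norm_num
    · rw [if_pos (by omega), hEv (2 * m + 1 - 2) (Nat.odd_iff.mpr (by omega))]
      ring
end

section
/- Define w(n) by the formal power series identity Σ_{n≥2} w(n)q^n = Σ_{i≥2} q^{2^{i−1}}(1+q^{2^{i−2}}) / ((1−q)·Π_{j=0}^{i−3}(1−q^{2^j})). Then w(n) is odd if and only if n is a power of 2. -/
open PowerSeries Finset

/-- The i-th summand of the reduced generating function:
q^{2^{i−1}}(1+q^{2^{i−2}}) / ((1−q)·∏_{j=0}^{i−3}(1−q^{2^j})). -/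
noncomputable def Wseries (i : ℕ) : PowerSeries ℤ :=
  PowerSeries.X ^ (2 ^ (i - 1)) * (1 + PowerSeries.X ^ (2 ^ (i - 2))) *
    (((1 - PowerSeries.X) *
        ∏ j ∈ Finset.range (i - 2), (1 - PowerSeries.X ^ (2 ^ j)) :
      PowerSeries ℤ).invOfUnit 1)

instance : CharP (PowerSeries (ZMod 2)) 2 :=
  charP_of_injective_ringHom (PowerSeries.C_injective) 2

lemma geom2 (i : ℕ) : 1 + ∑ j ∈ range i, 2 ^ j = 2 ^ i := by
  induction i with
  | zero => simp
  | succ k ih => rw [Finset.sum_range_succ, ← add_assoc, ih]; ring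

lemma map_Wseries (i : ℕ) :
    PowerSeries.map (Int.castRingHom (ZMod 2)) (Wseries (i + 2)) = X ^ (2 ^ (i + 1)) := by
  set D : PowerSeries ℤ :=
    (1 - X) * ∏ j ∈ range i, (1 - X ^ (2 ^ j)) with hD
  have hc : constantCoeff D = 1 := by
    simp [hD, map_prod, pow_pos]
  have hinv : D * D.invOfUnit 1 = 1 := mul_invOfUnit D 1 (by simp [hc])
  have key : Wseries (i + 2) * D = X ^ (2 ^ (i + 1)) * (1 + X ^ (2 ^ i)) := by
    show X ^ (2 ^ (i + 2 - 1)) * (1 + X ^ (2 ^ (i + 2 - 2))) * D.invOfUnit 1 * D = _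
    have h1 : i + 2 - 1 = i + 1 := rfl
    have h2 : i + 2 - 2 = i := rfl
    rw [h1, h2, mul_assoc, mul_comm (D.invOfUnit 1) D, hinv, mul_one]
  have hmap := congrArg (PowerSeries.map (Int.castRingHom (ZMod 2))) key
  rw [map_mul] at hmap
  set f := Int.castRingHom (ZMod 2)
  have hneg : (-1 : PowerSeries (ZMod 2)) = 1 := CharTwo.neg_eq 1
  have hXp : ∀ j : ℕ, (1 - X ^ (2 ^ j) : PowerSeries (ZMod 2)) = (1 + X) ^ (2 ^ j) := by
    intro j
    rw [add_pow_char_pow, one_pow, sub_eq_add_neg, ← neg_one_mul, hneg, one_mul]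
  have hDmap : PowerSeries.map f D = (1 + X) ^ (2 ^ i) := by
    rw [hD, map_mul, map_prod]
    simp only [map_sub, map_one, map_pow, PowerSeries.map_X]
    have hone : (1 - X : PowerSeries (ZMod 2)) = (1 + X) ^ (2 ^ 0) := by
      rw [pow_zero, pow_one, sub_eq_add_neg, ← neg_one_mul, hneg, one_mul]
    calc (1 - X) * ∏ j ∈ range i, (1 - X ^ 2 ^ j : PowerSeries (ZMod 2))
        = (1 + X) ^ 1 * ∏ j ∈ range i, (1 + X) ^ 2 ^ j := by
          rw [hone, pow_zero, pow_one]
          congr 1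
          exact Finset.prod_congr rfl fun j _ => hXp j
      _ = (1 + X) ^ (1 + ∑ j ∈ range i, 2 ^ j) := by
          rw [pow_add, Finset.prod_pow_eq_pow_sum]
      _ = (1 + X) ^ (2 ^ i) := by rw [geom2]
  rw [hDmap] at hmap
  have hrhs : PowerSeries.map f (X ^ (2 ^ (i + 1)) * (1 + X ^ (2 ^ i)))
      = X ^ (2 ^ (i + 1)) * (1 + X) ^ (2 ^ i) := by
    rw [map_mul, map_pow, PowerSeries.map_X, map_add, map_one, map_pow, PowerSeries.map_X,
      add_pow_char_pow, one_pow]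
  rw [hrhs] at hmap
  have hne : ((1 + X : PowerSeries (ZMod 2)) ^ (2 ^ i)) ≠ 0 := by
    apply pow_ne_zero
    intro h
    have h0 := congrArg (constantCoeff (R := ZMod 2)) h
    simp at h0
  exact mul_right_cancel₀ hne hmap

lemma coeff_vanish {n i : ℕ} (h : n < 2 ^ (i + 1)) :
    PowerSeries.coeff n (Wseries (i + 2)) = 0 := by
  have hrw : Wseries (i + 2) =
      ((1 + X ^ (2 ^ i)) *
        (((1 - X) * ∏ j ∈ range i, (1 - X ^ (2 ^ j)) : PowerSeries ℤ).invOfUnit 1)) *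
        X ^ (2 ^ (i + 1)) := by
    show X ^ (2 ^ (i + 2 - 1)) * (1 + X ^ (2 ^ (i + 2 - 2))) * _ = _
    have h1 : i + 2 - 1 = i + 1 := rfl
    have h2 : i + 2 - 2 = i := rfl
    rw [h1, h2]; ring
  rw [hrw, PowerSeries.coeff_mul_X_pow', if_neg (not_le.mpr h)]

/-- w(n) is odd if and only if n is a power of 2. -/
theorem stmt8 (w : ℕ → ℤ)
    (hw : ∀ n : ℕ, w n = ∑' i : ℕ, PowerSeries.coeff n (Wseries (i + 2))) :
    ∀ n, 2 ≤ n → (Odd (w n) ↔ ∃ a : ℕ, n = 2 ^ a) := by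
  intro n hn
  have hfin : ∀ i ∉ range n, PowerSeries.coeff n (Wseries (i + 2)) = 0 := by
    intro i hi
    rw [Finset.mem_range, not_lt] at hi
    exact coeff_vanish (lt_of_le_of_lt hi (lt_of_lt_of_le ((Nat.lt_two_pow_self (n := i)))
      (Nat.pow_le_pow_right (by norm_num) (Nat.le_succ i))))
  have hsum : w n = ∑ i ∈ range n, PowerSeries.coeff n (Wseries (i + 2)) := by
    rw [hw n]; exact tsum_eq_sum hfin
  have hcast : ((w n : ℤ) : ZMod 2)
      = ∑ i ∈ range n, (if n = 2 ^ (i + 1) then (1 : ZMod 2) else 0) := by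
    rw [hsum, Int.cast_sum]
    refine Finset.sum_congr rfl fun i _ => ?_
    have h2 := congrArg (PowerSeries.coeff n) (map_Wseries i)
    rw [PowerSeries.coeff_map, PowerSeries.coeff_X_pow] at h2
    exact h2
  have hiff : Odd (w n) ↔ ((w n : ZMod 2) ≠ 0) := by
    constructor
    · rintro ⟨k, hk⟩ hdvd
      rw [ZMod.intCast_zmod_eq_zero_iff_dvd] at hdvd
      obtain ⟨m, hm⟩ := hdvd
      omega
    · intro h
      rcases Int.even_or_odd (w n) with he | ho
      · obtain ⟨k, hk⟩ := he
        exact absurd (by rw [ZMod.intCast_zmod_eq_zero_iff_dvd]; exact ⟨k, by omega⟩) h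
      · exact ho
  constructor
  · intro hodd
    by_contra hnp
    push_neg at hnp
    have hzero : ∀ i ∈ range n, (if n = 2 ^ (i + 1) then (1 : ZMod 2) else 0) = 0 :=
      fun i _ => if_neg (hnp (i + 1))
    rw [Finset.sum_eq_zero hzero] at hcast
    exact (hiff.mp hodd) hcast
  · rintro ⟨a, rfl⟩
    have ha : 1 ≤ a := by
      by_contra h
      interval_cases a
      · norm_num at hn
    have hcond : ∀ i : ℕ, (2 ^ a = 2 ^ (i + 1)) ↔ i = a - 1 := by
      intro i
      constructor
      · intro h
        have := Nat.pow_right_injective (le_refl 2) h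
        omega
      · intro h
        subst h
        congr 1
        omega
    have hsum1 : ∑ i ∈ range (2 ^ a), (if 2 ^ a = 2 ^ (i + 1) then (1 : ZMod 2) else 0)
        = 1 := by
      have hterm : ∀ i ∈ range (2 ^ a),
          (if 2 ^ a = 2 ^ (i + 1) then (1 : ZMod 2) else 0)
            = (if i = a - 1 then 1 else 0) := fun i _ => by simp only [hcond i]
      rw [Finset.sum_congr rfl hterm,
        Finset.sum_ite_eq' (range (2 ^ a)) (a - 1) (fun _ => (1 : ZMod 2)), if_pos]
      rw [Finset.mem_range]
      have := Nat.lt_two_pow_self (n := a)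
      omega
    rw [hiff, hcast, hsum1]
    decide
end

section
/- Define w(n) by Σ_{n≥2} w(n)q^n = Σ_{i≥2} q^{2^{i−1}}(1+q^{2^{i−2}}) / ((1−q)·Π_{j=0}^{i−3}(1−q^{2^j})). If n = 2^a with a ≥ 1, then w(n) ≡ 2⌊a/2⌋ + 1 (mod 8). -/
open PowerSeries Finset

noncomputable def sqPS : PowerSeries ℤ →+* PowerSeries ℤ where
  toFun f := PowerSeries.mk fun n => if 2 ∣ n then PowerSeries.coeff (n / 2) f else 0
  map_one' := by
    ext n
    simp only [coeff_mk, coeff_one]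
    split_ifs <;> first | rfl | omega
  map_mul' f g := by
    ext n
    simp only [coeff_mk, coeff_mul]
    by_cases hn : 2 ∣ n
    · obtain ⟨m, rfl⟩ := hn
      rw [if_pos ⟨m, rfl⟩]
      have hd : (2 * m) / 2 = m := by omega
      rw [hd]
      set F : ℕ × ℕ → ℤ := fun p =>
        (if 2 ∣ p.1 then coeff (p.1/2) f else 0) * (if 2 ∣ p.2 then coeff (p.2/2) g else 0)
        with hF
      have h1 : ∑ p ∈ HasAntidiagonal.antidiagonal m, coeff p.1 f * coeff p.2 g
          = ∑ p ∈ (HasAntidiagonal.antidiagonal m).image (fun p : ℕ × ℕ => (2*p.1, 2*p.2)), F p := by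
        rw [Finset.sum_image (by intro x _ y _ h; simp only [Prod.mk.injEq] at h; ext <;> omega)]
        apply Finset.sum_congr rfl
        intro p _
        simp only [hF, Nat.mul_div_cancel_left _ (by norm_num : 0 < 2)]
        rw [if_pos (Dvd.intro p.1 rfl), if_pos (Dvd.intro p.2 rfl)]
      have h2 : ∑ p ∈ HasAntidiagonal.antidiagonal (2*m), F p
          = ∑ p ∈ (HasAntidiagonal.antidiagonal m).image (fun p : ℕ × ℕ => (2*p.1, 2*p.2)), F p := by
        symm
        apply Finset.sum_subset
        · intro p hp
          simp only [Finset.mem_image, HasAntidiagonal.mem_antidiagonal] at hp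
          obtain ⟨q, hq, rfl⟩ := hp
          rw [HasAntidiagonal.mem_antidiagonal]; omega
        · intro p hp hp2
          simp only [Finset.mem_image, HasAntidiagonal.mem_antidiagonal] at hp hp2
          have : ¬ (2 ∣ p.1) ∨ ¬ (2 ∣ p.2) := by
            by_contra hc
            push_neg at hc
            obtain ⟨⟨u, hu⟩, ⟨v, hv⟩⟩ := hc
            exact hp2 ⟨(u, v), by omega, by rw [Prod.mk.injEq]; omega⟩
          rcases this with h | h
          · simp only [hF, if_neg h, zero_mul]
          · simp only [hF, if_neg h, mul_zero]
      rw [h2, ← h1]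
    · rw [if_neg hn]
      symm
      apply Finset.sum_eq_zero
      intro p hp
      rw [HasAntidiagonal.mem_antidiagonal] at hp
      have : ¬ (2 ∣ p.1) ∨ ¬ (2 ∣ p.2) := by omega
      rcases this with h | h
      · rw [if_neg h, zero_mul]
      · rw [if_neg h, mul_zero]
  map_zero' := by ext n; simp
  map_add' f g := by
    ext n
    simp only [coeff_mk, map_add]
    split_ifs <;> simp

lemma sqPS_apply (f : PowerSeries ℤ) :
    sqPS f = PowerSeries.mk fun n => if 2 ∣ n then PowerSeries.coeff (n / 2) f else 0 := rfl

lemma coeff_sqPS (f : PowerSeries ℤ) (m : ℕ) :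
    PowerSeries.coeff (2 * m) (sqPS f) = PowerSeries.coeff m f := by
  rw [sqPS_apply, coeff_mk, if_pos ⟨m, rfl⟩, Nat.mul_div_cancel_left _ (by norm_num : 0 < 2)]

lemma coeff_sqPS_odd (f : PowerSeries ℤ) (n : ℕ) (h : ¬ 2 ∣ n) :
    PowerSeries.coeff n (sqPS f) = 0 := by
  rw [sqPS_apply, coeff_mk, if_neg h]

lemma sqPS_X : sqPS PowerSeries.X = PowerSeries.X ^ 2 := by
  ext n
  rw [sqPS_apply, coeff_mk, coeff_X_pow]
  rcases Nat.even_or_odd n with ⟨m, hm⟩ | ⟨m, hm⟩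
  · subst hm
    rw [if_pos ⟨m, by omega⟩]
    have h2 : (m + m) / 2 = m := by omega
    rw [h2, PowerSeries.coeff_X]
    split_ifs <;> first | rfl | omega
  · subst hm
    rw [if_neg (by omega), if_neg (by omega)]

lemma sqPS_X_pow (p : ℕ) : sqPS (PowerSeries.X ^ p) = PowerSeries.X ^ (2 * p) := by
  rw [map_pow, sqPS_X, ← pow_mul, mul_comm]

noncomputable def Jps : PowerSeries ℤ := PowerSeries.mk fun _ => 1

lemma hJ : (1 - PowerSeries.X) * Jps = 1 := by
  ext n
  rw [sub_mul, one_mul, map_sub]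
  cases n with
  | zero => simp [Jps, PowerSeries.coeff_zero_X_mul]
  | succ m =>
    rw [PowerSeries.coeff_succ_X_mul]
    simp [Jps, PowerSeries.coeff_one]

/-- uniqueness of inverses -/
lemma inv_unique' {R : Type*} [CommRing R] {x a b : R} (ha : x * a = 1) (hb : x * b = 1) :
    a = b := by
  have : a * (x * b) = b * (x * a) := by ring
  rw [ha, hb, mul_one, mul_one] at this
  exact this

noncomputable def Dden (k : ℕ) : PowerSeries ℤ :=
  (1 - PowerSeries.X) * ∏ j ∈ Finset.range k, (1 - PowerSeries.X ^ (2 ^ j))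

lemma constCoeff_Dden (k : ℕ) : PowerSeries.constantCoeff (Dden k) = 1 := by
  rw [Dden, map_mul, map_prod]
  rw [map_sub, map_one, PowerSeries.constantCoeff_X]
  have : ∀ j ∈ Finset.range k,
      PowerSeries.constantCoeff (1 - PowerSeries.X ^ (2 ^ j) : PowerSeries ℤ) = 1 := by
    intro j _
    rw [map_sub, map_one, map_pow, PowerSeries.constantCoeff_X, zero_pow (by positivity), sub_zero]
  rw [Finset.prod_congr rfl this]
  simp

lemma Dden_mul_inv (k : ℕ) : Dden k * (Dden k).invOfUnit 1 = 1 :=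
  PowerSeries.mul_invOfUnit _ 1 (by rw [constCoeff_Dden]; rfl)

lemma Wseries_eq (k : ℕ) : Wseries (k + 2) =
    PowerSeries.X ^ (2 ^ (k + 1)) * (1 + PowerSeries.X ^ (2 ^ k)) * (Dden k).invOfUnit 1 := by
  rw [Wseries, Dden]
  norm_num

lemma sq_Dden (k : ℕ) :
    (1 - PowerSeries.X) * sqPS (Dden k) = (1 + PowerSeries.X) * Dden (k + 1) := by
  rw [Dden, Dden, map_mul, map_sub, map_one, sqPS_X]
  rw [map_prod]
  have h1 : ∀ j ∈ Finset.range k,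
      sqPS (1 - PowerSeries.X ^ (2 ^ j)) = 1 - PowerSeries.X ^ (2 ^ (j + 1)) := by
    intro j _
    rw [map_sub, map_one, sqPS_X_pow, pow_succ, mul_comm]
  rw [Finset.prod_congr rfl h1, Finset.prod_range_succ']
  have h2 : (1 - PowerSeries.X ^ 2 : PowerSeries ℤ)
      = (1 - PowerSeries.X) * (1 + PowerSeries.X) := by ring
  rw [pow_zero, pow_one, h2]
  ring

/-- the key functional equation: W_{i+1}(q) = (1+q)/(1-q) · W_i(q²) -/
lemma Wfunc (k : ℕ) :
    Wseries (k + 3) = (1 + PowerSeries.X) * Jps * sqPS (Wseries (k + 2)) := by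
  have e1 : Wseries (k + 3) = PowerSeries.X ^ (2 ^ (k + 2)) *
      (1 + PowerSeries.X ^ (2 ^ (k + 1))) * (Dden (k+1)).invOfUnit 1 := by
    have := Wseries_eq (k + 1)
    convert this using 3 <;> omega
  rw [e1, Wseries_eq k, map_mul, map_mul, map_add, map_one, sqPS_X_pow, sqPS_X_pow]
  have hp1 : 2 * 2 ^ (k + 1) = 2 ^ (k + 2) := by rw [pow_succ]; ring
  have hp2 : 2 * 2 ^ k = 2 ^ (k + 1) := by rw [pow_succ]; ring
  rw [hp1, hp2]
  have key : (Dden (k+1)).invOfUnit 1 = (1 + PowerSeries.X) * Jps * sqPS ((Dden k).invOfUnit 1) := by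
    apply inv_unique' (x := Dden (k+1)) (Dden_mul_inv (k+1))
    have hsq : sqPS (Dden k) * sqPS ((Dden k).invOfUnit 1) = 1 := by
      rw [← map_mul, Dden_mul_inv, map_one]
    have hkey := sq_Dden k
    linear_combination (-(Jps * sqPS ((Dden k).invOfUnit 1))) * hkey
      + (sqPS (Dden k) * sqPS ((Dden k).invOfUnit 1)) * hJ + hsq
  rw [key]
  ring

noncomputable def Yser (i : ℕ) : PowerSeries ℤ := Wseries i * Jps

lemma hJ2 : (1 - PowerSeries.X ^ 2) * sqPS Jps = 1 := by
  have := congrArg sqPS hJ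
  rwa [map_mul, map_sub, map_one, sqPS_X] at this

/-- I1 -/
lemma ident1 (k : ℕ) : Wseries (k + 3) =
    -sqPS (Wseries (k + 2)) + 2 * ((1 + PowerSeries.X) * sqPS (Yser (k + 2))) := by
  rw [Wfunc, Yser, map_mul]
  set w := sqPS (Wseries (k + 2))
  set jq := sqPS Jps
  linear_combination (((1 + PowerSeries.X)^2) * jq * w) * hJ - w * hJ2
    - ((1 + PowerSeries.X) * Jps * w) * hJ2

/-- I2 -/
lemma ident2 (k : ℕ) : Yser (k + 3) =
    sqPS (Yser (k + 2)) + 3 * (PowerSeries.X * sqPS (Yser (k + 2)))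
      + 4 * (PowerSeries.X ^ 2 * (Jps * sqPS (Yser (k + 2)))) := by
  rw [Yser, Wfunc, Yser, map_mul]
  set w := sqPS (Wseries (k + 2))
  set jq := sqPS Jps
  set J := Jps
  set X := (PowerSeries.X : PowerSeries ℤ)
  linear_combination
    (w * ((1 + 3*X) * jq + (1 + X)^2 * J * jq)) * hJ + (-(w * (1 + X) * J^2)) * hJ2

lemma coeff_odd_pow (b : ℕ) : ¬ (2 ∣ 2 ^ (b + 1) - 1) := by
  have : 2 ≤ 2 ^ (b+1) := Nat.one_lt_two_pow (by omega)
  have h2 : 2 ∣ 2 ^ (b+1) := dvd_pow_self 2 (by omega)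
  omega

lemma coeff_numeral_mul (n : ℕ) (a : ℤ) (g : PowerSeries ℤ) :
    PowerSeries.coeff n ((a : PowerSeries ℤ) * g) = a * PowerSeries.coeff n g := by
  rw [show ((a : ℤ) : PowerSeries ℤ) = PowerSeries.C a by simp, PowerSeries.coeff_C_mul]

/-- recursion for W coefficients -/
lemma recW (k b : ℕ) :
    PowerSeries.coeff (2 ^ (b + 1)) (Wseries (k + 3)) =
      -(PowerSeries.coeff (2 ^ b) (Wseries (k + 2)))
        + 2 * PowerSeries.coeff (2 ^ b) (Yser (k + 2)) := by
  have h := congrArg (PowerSeries.coeff (2 ^ (b + 1))) (ident1 k)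
  have hpow : 2 ^ (b + 1) = 2 * 2 ^ b := by rw [pow_succ]; ring
  have hsplit : (1 + PowerSeries.X) * sqPS (Yser (k + 2)) =
      sqPS (Yser (k + 2)) + PowerSeries.X * sqPS (Yser (k + 2)) := by ring
  rw [hsplit] at h
  have hx : PowerSeries.coeff (2 ^ (b + 1)) (PowerSeries.X * sqPS (Yser (k + 2))) = 0 := by
    have : 2 ^ (b + 1) = (2 ^ (b + 1) - 1) + 1 := by
      have : 1 ≤ 2 ^ (b+1) := Nat.one_le_two_pow
      omega
    rw [this, PowerSeries.coeff_succ_X_mul]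
    exact coeff_sqPS_odd _ _ (coeff_odd_pow b)
  rw [map_add, map_neg, show ((2 : PowerSeries ℤ)) = ((2:ℤ) : PowerSeries ℤ) by norm_num] at h
  rw [coeff_numeral_mul, map_add, hx, add_zero] at h
  rw [hpow, coeff_sqPS, coeff_sqPS] at h
  rw [hpow]
  exact h

/-- recursion for Y coefficients -/
lemma recY (k b : ℕ) :
    PowerSeries.coeff (2 ^ (b + 1)) (Yser (k + 3)) =
      PowerSeries.coeff (2 ^ b) (Yser (k + 2))
        + 4 * PowerSeries.coeff (2 ^ (b + 1) - 2) (Jps * sqPS (Yser (k + 2))) := by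
  have h := congrArg (PowerSeries.coeff (2 ^ (b + 1))) (ident2 k)
  have hpow : 2 ^ (b + 1) = 2 * 2 ^ b := by rw [pow_succ]; ring
  have hx : PowerSeries.coeff (2 ^ (b + 1)) (PowerSeries.X * sqPS (Yser (k + 2))) = 0 := by
    have h1 : 2 ^ (b + 1) = (2 ^ (b + 1) - 1) + 1 := by
      have : 1 ≤ 2 ^ (b+1) := Nat.one_le_two_pow
      omega
    rw [h1, PowerSeries.coeff_succ_X_mul]
    exact coeff_sqPS_odd _ _ (coeff_odd_pow b)
  have hx2 : PowerSeries.coeff (2 ^ (b + 1)) (PowerSeries.X ^ 2 * (Jps * sqPS (Yser (k + 2))))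
      = PowerSeries.coeff (2 ^ (b + 1) - 2) (Jps * sqPS (Yser (k + 2))) := by
    rw [PowerSeries.coeff_X_pow_mul']
    rw [if_pos]
    have : 2 ≤ 2 ^ (b+1) := Nat.one_lt_two_pow (by omega)
    omega
  rw [show ((3 : PowerSeries ℤ)) = ((3:ℤ) : PowerSeries ℤ) by norm_num,
    show ((4 : PowerSeries ℤ)) = ((4:ℤ) : PowerSeries ℤ) by norm_num] at h
  rw [map_add, map_add, coeff_numeral_mul, coeff_numeral_mul, hx, hx2, mul_zero, add_zero] at h
  rw [hpow, coeff_sqPS] at h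
  rw [hpow]
  exact h

lemma coeff_Jps (n : ℕ) : PowerSeries.coeff n Jps = 1 := by
  rw [Jps, PowerSeries.coeff_mk]

lemma JJ_eq : Jps * Jps = PowerSeries.mk fun n => (n : ℤ) + 1 := by
  ext n
  rw [PowerSeries.coeff_mul, PowerSeries.coeff_mk]
  have : ∀ p ∈ Finset.HasAntidiagonal.antidiagonal n,
      PowerSeries.coeff p.1 Jps * PowerSeries.coeff p.2 Jps = 1 := by
    intro p _; rw [coeff_Jps, coeff_Jps, mul_one]
  rw [Finset.sum_congr rfl this, Finset.sum_const, Finset.Nat.card_antidiagonal]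
  simp

lemma W2_eq : Wseries 2 = PowerSeries.X ^ 2 * ((1 + PowerSeries.X) * Jps) := by
  have h : Wseries 2 = PowerSeries.X ^ 2 * (1 + PowerSeries.X) * (Dden 0).invOfUnit 1 := by
    have := Wseries_eq 0
    simpa using this
  have hinv : (Dden 0).invOfUnit 1 = Jps := by
    apply inv_unique' (x := Dden 0) (Dden_mul_inv 0)
    rw [Dden]
    simpa using hJ
  rw [h, hinv]; ring

lemma Y2_eq : Yser 2 = PowerSeries.X ^ 2 * ((1 + PowerSeries.X) * (Jps * Jps)) := by
  rw [Yser, W2_eq]; ring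

lemma coeff_W2 (n : ℕ) (hn : 3 ≤ n) : PowerSeries.coeff n (Wseries 2) = 2 := by
  rw [W2_eq, PowerSeries.coeff_X_pow_mul', if_pos (by omega)]
  have hs : (1 + PowerSeries.X) * Jps = Jps + PowerSeries.X * Jps := by ring
  rw [hs, map_add, coeff_Jps]
  have h1 : n - 2 = (n - 3) + 1 := by omega
  rw [h1, PowerSeries.coeff_succ_X_mul, coeff_Jps]
  norm_num

lemma coeff_W2_two : PowerSeries.coeff 2 (Wseries 2) = 1 := by
  rw [W2_eq, PowerSeries.coeff_X_pow_mul', if_pos (by omega)]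
  have hs : (1 + PowerSeries.X) * Jps = Jps + PowerSeries.X * Jps := by ring
  rw [hs, map_add, coeff_Jps]
  norm_num [PowerSeries.coeff_zero_X_mul]

lemma coeff_Y2 (n : ℕ) (hn : 2 ≤ n) :
    PowerSeries.coeff n (Yser 2) = 2 * (n : ℤ) - 3 := by
  rw [Y2_eq, PowerSeries.coeff_X_pow_mul', if_pos (by omega)]
  have hs : (1 + PowerSeries.X) * (Jps * Jps) = Jps * Jps + PowerSeries.X * (Jps * Jps) := by
    ring
  rw [hs, map_add, JJ_eq, PowerSeries.coeff_mk]
  rcases Nat.lt_or_ge n 3 with h3 | h3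
  · have h2 : n = 2 := by omega
    subst h2
    norm_num [PowerSeries.coeff_zero_X_mul]
  · have h1 : n - 2 = (n - 3) + 1 := by omega
    rw [h1, PowerSeries.coeff_succ_X_mul, PowerSeries.coeff_mk]
    have : ((n - 3 : ℕ) : ℤ) = (n : ℤ) - 3 := by omega
    have h2 : (((n - 3) + 1 : ℕ) : ℤ) = (n : ℤ) - 2 := by omega
    rw [h2, this]
    ring

lemma coeff_W_vanish (k n : ℕ) (hn : n < 2 ^ (k + 1)) :
    PowerSeries.coeff n (Wseries (k + 2)) = 0 := by
  rw [Wseries_eq, mul_assoc, PowerSeries.coeff_X_pow_mul', if_neg (by omega)]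

lemma mainInd : ∀ b : ℕ, 1 ≤ b → ∀ i : ℕ, 2 ≤ i → i ≤ b + 1 →
    (PowerSeries.coeff (2 ^ b) (Yser i) ≡ 1 [ZMOD 4]) ∧
    (PowerSeries.coeff (2 ^ b) (Wseries i) ≡
      (if i = b + 1 then 1 else if Even i then 2 else 0) [ZMOD 8]) := by
  intro b
  induction b with
  | zero => omega
  | succ b ih =>
    intro _ i hi2 hib
    rcases Nat.lt_or_ge b 1 with hb0 | hb1
    · -- b = 0, so b+1 = 1, i = 2
      have hb : b = 0 := by omega
      subst hb
      have hi : i = 2 := by omega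
      subst hi
      constructor
      · rw [show (2:ℕ)^1 = 2 by norm_num, coeff_Y2 2 (by norm_num)]
        decide
      · rw [show (2:ℕ)^1 = 2 by norm_num, coeff_W2_two]
        norm_num
    · -- b ≥ 1
      rcases Nat.lt_or_ge i 3 with hi3 | hi3
      · -- i = 2
        have hi : i = 2 := by omega
        subst hi
        constructor
        · have hge : 2 ≤ 2^(b+1) := by
            calc 2 = 2^1 := rfl
            _ ≤ 2^(b+1) := Nat.pow_le_pow_right (by norm_num) (by omega)
          rw [coeff_Y2 (2^(b+1)) hge]
          have hcast : ((2 ^ (b+1) : ℕ) : ℤ) = 2 ^ (b+1) := by push_cast; ring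
          rw [hcast]
          have : (4:ℤ) ∣ (1 - (2 * 2 ^ (b + 1) - 3)) := by
            have h4 : (4:ℤ) ∣ 2 ^ (b+1+1) := by
              rw [show (4:ℤ) = 2^2 by norm_num]
              exact pow_dvd_pow 2 (by omega)
            rw [pow_succ] at h4
            obtain ⟨c, hc⟩ := h4
            exact ⟨1 - c, by linarith⟩
          exact (Int.modEq_iff_dvd.mpr this).symm.symm
        · have hne : (2:ℕ) ≠ b + 1 + 1 := by omega
          rw [if_neg hne, if_pos (by decide)]
          have hge : 4 ≤ 2^(b+1) := by
            calc 4 = 2^2 := rfl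
            _ ≤ 2^(b+1) := Nat.pow_le_pow_right (by norm_num) (by omega)
          rw [coeff_W2 (2^(b+1)) (by omega)]
      · -- i = k + 3
        obtain ⟨k, rfl⟩ : ∃ k, i = k + 3 := ⟨i - 3, by omega⟩
        have hIH := ih hb1 (k + 2) (by omega) (by omega)
        obtain ⟨hY, hW⟩ := hIH
        constructor
        · rw [recY]
          have h4 : PowerSeries.coeff (2 ^ b) (Yser (k + 2)) +
              4 * PowerSeries.coeff (2 ^ (b+1) - 2) (Jps * sqPS (Yser (k + 2))) ≡
              1 + 4 * PowerSeries.coeff (2 ^ (b+1) - 2) (Jps * sqPS (Yser (k + 2))) [ZMOD 4] :=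
            hY.add_right _
          have h0 : (1:ℤ) + 4 * PowerSeries.coeff (2 ^ (b+1) - 2) (Jps * sqPS (Yser (k + 2)))
              ≡ 1 [ZMOD 4] := by
            have : (4:ℤ) ∣ (1 - (1 + 4 * PowerSeries.coeff (2 ^ (b+1) - 2)
                (Jps * sqPS (Yser (k + 2))))) :=
              ⟨-(PowerSeries.coeff (2 ^ (b+1) - 2) (Jps * sqPS (Yser (k + 2)))), by ring⟩
            exact (Int.modEq_iff_dvd.mpr this).symm.symm
          exact h4.trans h0
        · rw [recW]
          set v : ℤ := if k + 2 = b + 1 then 1 else if Even (k + 2) then 2 else 0 with hv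
          have h2y : 2 * PowerSeries.coeff (2 ^ b) (Yser (k + 2)) ≡ 2 [ZMOD 8] := by
            have := hY.mul_left' (c := 2)
            norm_num at this
            exact this
          have hcomb : -(PowerSeries.coeff (2 ^ b) (Wseries (k + 2))) +
              2 * PowerSeries.coeff (2 ^ b) (Yser (k + 2)) ≡ -v + 2 [ZMOD 8] :=
            (hW.neg).add h2y
          have hval : -v + 2 = (if k + 3 = b + 1 + 1 then (1:ℤ)
              else if Even (k + 3) then 2 else 0) := by
            rw [hv]
            by_cases h1 : k + 2 = b + 1
            · rw [if_pos h1, if_pos (by omega)]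
              norm_num
            · rw [if_neg h1, if_neg (show ¬ (k + 3 = b + 1 + 1) by omega)]
              simp only [Nat.even_iff]
              by_cases h2 : (k + 2) % 2 = 0
              · rw [if_pos h2, if_neg (by omega)]
                norm_num
              · rw [if_neg h2, if_pos (by omega)]
                norm_num
          rw [hval] at hcomb
          exact hcomb

lemma modEq_sum {s : Finset ℕ} {f g : ℕ → ℤ} {n : ℤ} (h : ∀ i ∈ s, f i ≡ g i [ZMOD n]) :
    (∑ i ∈ s, f i) ≡ (∑ i ∈ s, g i) [ZMOD n] := by
  classical
  induction s using Finset.cons_induction with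
  | empty => simp
  | cons a s' ha ih =>
    rw [Finset.sum_cons, Finset.sum_cons]
    exact (h a (Finset.mem_cons_self a s')).add
      (ih fun i hi => h i (Finset.mem_cons_of_mem hi))

lemma sum_even_indicator (a : ℕ) :
    ∑ i ∈ Finset.range a, (if Even i then (2:ℤ) else 0) = 2 * (((a + 1) / 2 : ℕ) : ℤ) := by
  induction a with
  | zero => simp
  | succ a ih =>
    rw [Finset.sum_range_succ, ih]
    simp only [Nat.even_iff]
    by_cases hp : a % 2 = 0
    · rw [if_pos hp]
      have h1 : (a + 1) / 2 = a / 2 := by omega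
      have h2 : (a + 2) / 2 = a / 2 + 1 := by omega
      rw [h1, h2]; push_cast; ring
    · rw [if_neg hp]
      have h2 : (a + 2) / 2 = (a + 1) / 2 := by omega
      rw [h2]; ring

lemma sum_val (a : ℕ) (ha : 1 ≤ a) :
    ∑ i ∈ Finset.range a, (if i + 2 = a + 1 then (1:ℤ) else if Even (i + 2) then 2 else 0)
      = 2 * ((a / 2 : ℕ) : ℤ) + 1 := by
  obtain ⟨c, rfl⟩ : ∃ c, a = c + 1 := ⟨a - 1, by omega⟩
  rw [Finset.sum_range_succ]
  have hlast : (if c + 2 = c + 1 + 1 then (1:ℤ) else if Even (c + 2) then 2 else 0) = 1 := by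
    rw [if_pos rfl]
  rw [hlast]
  have hrest : ∑ i ∈ Finset.range c,
      (if i + 2 = c + 1 + 1 then (1:ℤ) else if Even (i + 2) then 2 else 0)
      = ∑ i ∈ Finset.range c, (if Even i then (2:ℤ) else 0) := by
    apply Finset.sum_congr rfl
    intro i hi
    rw [Finset.mem_range] at hi
    rw [if_neg (show ¬ (i + 2 = c + 1 + 1) by omega)]
    simp only [Nat.even_iff]
    by_cases h : i % 2 = 0
    · rw [if_pos (by omega), if_pos h]
    · rw [if_neg (by omega), if_neg h]
  rw [hrest, sum_even_indicator]

/-- If n = 2^a with a ≥ 1, then w(n) ≡ 2⌊a/2⌋ + 1 (mod 8). -/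
theorem stmt9 (w : ℕ → ℤ)
    (hw : ∀ n : ℕ, w n = ∑' i : ℕ, PowerSeries.coeff n (Wseries (i + 2)))
    (a : ℕ) (ha : 1 ≤ a) :
    w (2 ^ a) ≡ 2 * ((a / 2 : ℕ) : ℤ) + 1 [ZMOD 8] := by
  rw [hw]
  have hsum : ∑' i : ℕ, PowerSeries.coeff (2 ^ a) (Wseries (i + 2))
      = ∑ i ∈ Finset.range a, PowerSeries.coeff (2 ^ a) (Wseries (i + 2)) := by
    apply tsum_eq_sum
    intro i hi
    rw [Finset.mem_range, not_lt] at hi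
    exact coeff_W_vanish i (2 ^ a) (Nat.pow_lt_pow_right (by norm_num) (by omega))
  rw [hsum]
  have hcong : ∑ i ∈ Finset.range a, PowerSeries.coeff (2 ^ a) (Wseries (i + 2)) ≡
      ∑ i ∈ Finset.range a, (if i + 2 = a + 1 then (1:ℤ) else if Even (i + 2) then 2 else 0)
      [ZMOD 8] := by
    apply modEq_sum
    intro i hi
    rw [Finset.mem_range] at hi
    exact (mainInd a ha (i + 2) (by omega) (by omega)).2
  rw [sum_val a ha] at hcong
  exact hcong
end

section
/- Let u(n) be defined by Σ_{n≥1} u(n)q^n = 2·Σ_{i≥1} q^{2^i−1}(1+q^{2^{i−1}})·Π_{j=0}^{i−2} 1/(1−q^{2^j}), and w(n) by Σ_{n≥2} w(n)q^n = Σ_{i≥2} q^{2^{i−1}}(1+q^{2^{i−2}}) / ((1−q)·Π_{j=0}^{i−3}(1−q^{2^j})). Then 2w(n) = u(2n) = u(2n−1) for all n ≥ 2. -/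
open PowerSeries Finset

/-- The "substitute X ↦ X²" map on power series, as a ring hom. -/
noncomputable def Dmap : PowerSeries ℤ →+* PowerSeries ℤ where
  toFun f := PowerSeries.mk fun n => if n % 2 = 0 then PowerSeries.coeff (n / 2) f else 0
  map_one' := by
    ext n
    simp only [coeff_mk, coeff_one]
    rcases Nat.mod_two_eq_zero_or_one n with h | h
    · rw [if_pos h]
      by_cases h0 : n = 0
      · simp [h0]
      · rw [if_neg (show ¬ n / 2 = 0 by omega), if_neg h0]
    · rw [if_neg (by omega), if_neg (show ¬ n = 0 by omega)]
  map_mul' f g := by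
    ext n
    simp only [coeff_mk, coeff_mul]
    rcases Nat.mod_two_eq_zero_or_one n with h | h
    · rw [if_pos h]
      obtain ⟨m, rfl⟩ : ∃ m, n = m + m := ⟨n / 2, by omega⟩
      rw [show (m + m) / 2 = m from by omega]
      have hsub : (antidiagonal m).image (fun p : ℕ × ℕ => (2 * p.1, 2 * p.2)) ⊆
          antidiagonal (m + m) := by
        intro p hp
        simp only [mem_image, HasAntidiagonal.mem_antidiagonal] at hp ⊢
        obtain ⟨q, hq, rfl⟩ := hp
        omega
      rw [← Finset.sum_subset hsub]
      · rw [Finset.sum_image (by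
          intro a _ b _ hab
          simp only [Prod.mk.injEq] at hab
          exact Prod.ext (by omega) (by omega))]
        apply Finset.sum_congr rfl
        intro p _
        rw [if_pos (by omega), if_pos (by omega),
          Nat.mul_div_cancel_left _ (by norm_num : 0 < 2),
          Nat.mul_div_cancel_left _ (by norm_num : 0 < 2)]
      · intro p hp hnp
        simp only [HasAntidiagonal.mem_antidiagonal] at hp
        rcases Nat.mod_two_eq_zero_or_one p.1 with h1 | h1
        · exfalso
          apply hnp
          simp only [mem_image, HasAntidiagonal.mem_antidiagonal]
          exact ⟨(p.1 / 2, p.2 / 2), by omega, Prod.ext (by omega) (by omega)⟩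
        · rw [if_neg (by omega)]
          ring
    · rw [if_neg (by omega)]
      symm
      apply Finset.sum_eq_zero
      intro p hp
      simp only [HasAntidiagonal.mem_antidiagonal] at hp
      rcases Nat.mod_two_eq_zero_or_one p.1 with h1 | h1
      · rw [if_neg (show ¬ p.2 % 2 = 0 by omega)]
        ring
      · rw [if_neg (by omega)]
        ring
  map_zero' := by
    ext n
    simp [coeff_mk]
  map_add' f g := by
    ext n
    simp only [coeff_mk, map_add]
    split <;> simp

theorem coeff_Dmap (n : ℕ) (f : PowerSeries ℤ) :
    PowerSeries.coeff n (Dmap f) =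
      if n % 2 = 0 then PowerSeries.coeff (n / 2) f else 0 := by
  simp only [Dmap, RingHom.coe_mk, MonoidHom.coe_mk, OneHom.coe_mk, coeff_mk]

theorem coeff_Dmap_even (k : ℕ) (f : PowerSeries ℤ) :
    PowerSeries.coeff (2 * k) (Dmap f) = PowerSeries.coeff k f := by
  rw [coeff_Dmap, if_pos (by omega), Nat.mul_div_cancel_left _ (by norm_num : 0 < 2)]

theorem coeff_Dmap_odd (k : ℕ) (f : PowerSeries ℤ) :
    PowerSeries.coeff (2 * k + 1) (Dmap f) = 0 := by
  rw [coeff_Dmap, if_neg (by omega)]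

theorem Dmap_X : Dmap PowerSeries.X = PowerSeries.X ^ 2 := by
  ext n
  rw [coeff_Dmap, PowerSeries.coeff_X_pow]
  rcases Nat.mod_two_eq_zero_or_one n with h | h
  · rw [if_pos h, PowerSeries.coeff_X]
    by_cases h2 : n = 2
    · rw [if_pos (show n / 2 = 1 by omega), if_pos h2]
    · rw [if_neg (show ¬ n / 2 = 1 by omega), if_neg h2]
  · rw [if_neg (by omega), if_neg (show ¬ n = 2 by omega)]

theorem Dmap_X_pow (k : ℕ) : Dmap (PowerSeries.X ^ k) = PowerSeries.X ^ (2 * k) := by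
  rw [map_pow, Dmap_X, ← pow_mul, mul_comm]

theorem Dmap_invOfUnit (f : PowerSeries ℤ) (hf : PowerSeries.constantCoeff f = 1) :
    Dmap (f.invOfUnit 1) = (Dmap f).invOfUnit 1 := by
  have hDf : PowerSeries.constantCoeff (Dmap f) = 1 := by
    rw [← PowerSeries.coeff_zero_eq_constantCoeff_apply, coeff_Dmap, if_pos rfl]
    simpa using hf
  have h1 : Dmap f * Dmap (f.invOfUnit 1) = 1 := by
    rw [← map_mul, PowerSeries.mul_invOfUnit f 1 (by simpa using hf), map_one]
  have h2 : Dmap f * (Dmap f).invOfUnit 1 = 1 :=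
    PowerSeries.mul_invOfUnit _ 1 (by simpa using hDf)
  calc Dmap (f.invOfUnit 1) = Dmap (f.invOfUnit 1) * (Dmap f * (Dmap f).invOfUnit 1) := by
        rw [h2, mul_one]
    _ = (Dmap f * Dmap (f.invOfUnit 1)) * (Dmap f).invOfUnit 1 := by ring
    _ = (Dmap f).invOfUnit 1 := by rw [h1, one_mul]

theorem coeff_X_pow_mul_eq_zero {f : PowerSeries ℤ} {k m : ℕ} (h : m < k) :
    PowerSeries.coeff m (PowerSeries.X ^ k * f) = 0 := by
  rw [PowerSeries.coeff_mul]
  apply Finset.sum_eq_zero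
  intro p hp
  rw [HasAntidiagonal.mem_antidiagonal] at hp
  rw [PowerSeries.coeff_X_pow, if_neg (by omega), zero_mul]

theorem Useries_vanish (i m : ℕ) (h : m < 2 ^ i - 1) :
    PowerSeries.coeff m (Useries i) = 0 := by
  have hre : Useries i = PowerSeries.X ^ (2 ^ i - 1) *
      (2 * (1 + PowerSeries.X ^ (2 ^ (i - 1))) *
        ∏ j ∈ Finset.range (i - 1),
          ((1 - PowerSeries.X ^ (2 ^ j) : PowerSeries ℤ).invOfUnit 1)) := by
    unfold Useries; ring
  rw [hre]
  exact coeff_X_pow_mul_eq_zero h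

theorem Wseries_vanish (i m : ℕ) (h : m < 2 ^ (i - 1)) :
    PowerSeries.coeff m (Wseries i) = 0 := by
  have hre : Wseries i = PowerSeries.X ^ (2 ^ (i - 1)) *
      ((1 + PowerSeries.X ^ (2 ^ (i - 2))) *
        (((1 - PowerSeries.X) *
          ∏ j ∈ Finset.range (i - 2), (1 - PowerSeries.X ^ (2 ^ j)) :
        PowerSeries ℤ).invOfUnit 1)) := by
    unfold Wseries; ring
  rw [hre]
  exact coeff_X_pow_mul_eq_zero h

theorem keyId (i : ℕ) :
    PowerSeries.X * Useries (i + 2) = 2 * (1 + PowerSeries.X) * Dmap (Wseries (i + 2)) := by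
  have h2pow : ∀ k : ℕ, (2 : ℕ) ^ k ≠ 0 := fun k => pow_ne_zero k (by norm_num)
  have hfac : ∀ j : ℕ, PowerSeries.constantCoeff (1 - PowerSeries.X ^ (2 ^ j) : PowerSeries ℤ) = 1 := by
    intro j
    simp [zero_pow (h2pow j)]
  have hAc : PowerSeries.constantCoeff
      (∏ j ∈ Finset.range (i + 1), (1 - PowerSeries.X ^ (2 ^ j) : PowerSeries ℤ)) = 1 := by
    rw [map_prod]
    exact Finset.prod_eq_one fun j _ => hfac j
  have hBc : PowerSeries.constantCoeff
      ((1 - PowerSeries.X) *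
        ∏ j ∈ Finset.range i, (1 - PowerSeries.X ^ (2 ^ j) : PowerSeries ℤ)) = 1 := by
    rw [map_mul, map_prod]
    rw [Finset.prod_eq_one fun j _ => hfac j]
    simp
  have hWdef : Wseries (i + 2) = PowerSeries.X ^ (2 ^ (i + 1)) *
      (1 + PowerSeries.X ^ (2 ^ i)) *
      (((1 - PowerSeries.X) *
        ∏ j ∈ Finset.range i, (1 - PowerSeries.X ^ (2 ^ j)) : PowerSeries ℤ).invOfUnit 1) := rfl
  have hUdef : Useries (i + 2) = 2 * PowerSeries.X ^ (2 ^ (i + 2) - 1) *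
      (1 + PowerSeries.X ^ (2 ^ (i + 1))) *
      ∏ j ∈ Finset.range (i + 1),
        ((1 - PowerSeries.X ^ (2 ^ j) : PowerSeries ℤ).invOfUnit 1) := rfl
  have epow : ∀ k : ℕ, 2 * 2 ^ k = 2 ^ (k + 1) := fun k => by rw [pow_succ]; ring
  have hProdInv : (∏ j ∈ Finset.range (i + 1),
        ((1 - PowerSeries.X ^ (2 ^ j) : PowerSeries ℤ).invOfUnit 1)) *
      ∏ j ∈ Finset.range (i + 1), (1 - PowerSeries.X ^ (2 ^ j) : PowerSeries ℤ) = 1 := by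
    rw [← Finset.prod_mul_distrib]
    apply Finset.prod_eq_one
    intro j _
    rw [mul_comm]
    exact PowerSeries.mul_invOfUnit _ 1 (by simpa using hfac j)
  have hVc : PowerSeries.constantCoeff
      ((1 + PowerSeries.X) *
        ∏ j ∈ Finset.range (i + 1), (1 - PowerSeries.X ^ (2 ^ j) : PowerSeries ℤ)) = 1 := by
    rw [map_mul, hAc, mul_one, map_add, map_one, PowerSeries.constantCoeff_X, add_zero]
  have hVinv := PowerSeries.mul_invOfUnit
    ((1 + PowerSeries.X) *
      ∏ j ∈ Finset.range (i + 1), (1 - PowerSeries.X ^ (2 ^ j) : PowerSeries ℤ)) 1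
    (by simpa using hVc)
  have hPinv : (∏ j ∈ Finset.range (i + 1),
        ((1 - PowerSeries.X ^ (2 ^ j) : PowerSeries ℤ).invOfUnit 1)) =
      (1 + PowerSeries.X) *
        (((1 + PowerSeries.X) *
          ∏ j ∈ Finset.range (i + 1), (1 - PowerSeries.X ^ (2 ^ j) : PowerSeries ℤ)).invOfUnit 1) := by
    have step : (∏ j ∈ Finset.range (i + 1), ((1 - PowerSeries.X ^ (2 ^ j) : PowerSeries ℤ).invOfUnit 1)) =
        (∏ j ∈ Finset.range (i + 1), ((1 - PowerSeries.X ^ (2 ^ j) : PowerSeries ℤ).invOfUnit 1)) *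
        (((1 + PowerSeries.X) * ∏ j ∈ Finset.range (i + 1), (1 - PowerSeries.X ^ (2 ^ j) : PowerSeries ℤ)) *
        (((1 + PowerSeries.X) * ∏ j ∈ Finset.range (i + 1), (1 - PowerSeries.X ^ (2 ^ j) : PowerSeries ℤ)).invOfUnit 1)) := by
      rw [hVinv, mul_one]
    rw [step]
    have step2 : (∏ j ∈ Finset.range (i + 1), ((1 - PowerSeries.X ^ (2 ^ j) : PowerSeries ℤ).invOfUnit 1)) *
        (((1 + PowerSeries.X) * ∏ j ∈ Finset.range (i + 1), (1 - PowerSeries.X ^ (2 ^ j) : PowerSeries ℤ)) *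
        (((1 + PowerSeries.X) * ∏ j ∈ Finset.range (i + 1), (1 - PowerSeries.X ^ (2 ^ j) : PowerSeries ℤ)).invOfUnit 1))
        = ((∏ j ∈ Finset.range (i + 1), ((1 - PowerSeries.X ^ (2 ^ j) : PowerSeries ℤ).invOfUnit 1)) *
        ∏ j ∈ Finset.range (i + 1), (1 - PowerSeries.X ^ (2 ^ j) : PowerSeries ℤ)) *
        ((1 + PowerSeries.X) *
        (((1 + PowerSeries.X) * ∏ j ∈ Finset.range (i + 1), (1 - PowerSeries.X ^ (2 ^ j) : PowerSeries ℤ)).invOfUnit 1)) := by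
      ring
    rw [step2, hProdInv, one_mul]
  have hDB : (1 - PowerSeries.X ^ 2 : PowerSeries ℤ) *
      ∏ j ∈ Finset.range i, (1 - PowerSeries.X ^ (2 ^ (j + 1))) =
      (1 + PowerSeries.X) *
        ∏ j ∈ Finset.range (i + 1), (1 - PowerSeries.X ^ (2 ^ j)) := by
    rw [Finset.prod_range_succ']
    rw [pow_zero, pow_one]
    ring
  have hx : (PowerSeries.X : PowerSeries ℤ) ^ (2 ^ (i + 1 + 1)) =
      PowerSeries.X * PowerSeries.X ^ (2 ^ (i + 2) - 1) := by
    rw [← pow_succ']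
    congr 1
    have h1 : (0 : ℕ) < 2 ^ (i + 2) := pow_pos (by norm_num) _
    have h2 : (2 : ℕ) ^ (i + 1 + 1) = 2 ^ (i + 2) := rfl
    omega
  rw [hUdef, hWdef]
  simp only [map_mul]
  rw [Dmap_invOfUnit _ hBc]
  simp only [map_mul, map_sub, map_add, map_one, map_prod, Dmap_X, Dmap_X_pow, epow]
  rw [hDB, hPinv, hx]
  ring

theorem keyCoeff (i n : ℕ) (hn : 1 ≤ n) :
    PowerSeries.coeff (2 * n) (Useries (i + 2)) =
      2 * PowerSeries.coeff n (Wseries (i + 2)) ∧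
    PowerSeries.coeff (2 * n - 1) (Useries (i + 2)) =
      2 * PowerSeries.coeff n (Wseries (i + 2)) := by
  have hk := keyId i
  have hC2 : (PowerSeries.C) 2 = (2 : PowerSeries ℤ) := map_ofNat _ 2
  have hexp : ∀ m : ℕ, PowerSeries.coeff (m + 1)
      (2 * (1 + PowerSeries.X) * Dmap (Wseries (i + 2))) =
      2 * PowerSeries.coeff (m + 1) (Dmap (Wseries (i + 2))) +
      2 * PowerSeries.coeff m (Dmap (Wseries (i + 2))) := by
    intro m
    have hre : 2 * (1 + PowerSeries.X) * Dmap (Wseries (i + 2)) =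
        (PowerSeries.C) 2 * Dmap (Wseries (i + 2)) +
        (PowerSeries.C) 2 * (PowerSeries.X * Dmap (Wseries (i + 2))) := by
      rw [hC2]; ring
    rw [hre, map_add, PowerSeries.coeff_C_mul, PowerSeries.coeff_C_mul,
      PowerSeries.coeff_succ_X_mul]
  constructor
  · have h1 : PowerSeries.coeff (2 * n) (Useries (i + 2)) =
        PowerSeries.coeff (2 * n + 1) (PowerSeries.X * Useries (i + 2)) :=
      (PowerSeries.coeff_succ_X_mul _ _).symm
    rw [h1, hk, hexp (2 * n), coeff_Dmap_odd, coeff_Dmap_even]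
    ring
  · obtain ⟨m, rfl⟩ : ∃ m, n = m + 1 := ⟨n - 1, by omega⟩
    have he : 2 * (m + 1) - 1 = 2 * m + 1 := by omega
    rw [he]
    have h1 : PowerSeries.coeff (2 * m + 1) (Useries (i + 2)) =
        PowerSeries.coeff (2 * m + 1 + 1) (PowerSeries.X * Useries (i + 2)) :=
      (PowerSeries.coeff_succ_X_mul _ _).symm
    rw [h1, hk, hexp (2 * m + 1)]
    have h3 : PowerSeries.coeff (2 * m + 1 + 1) (Dmap (Wseries (i + 2))) =
        PowerSeries.coeff (m + 1) (Wseries (i + 2)) := by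
      rw [show 2 * m + 1 + 1 = 2 * (m + 1) from by ring, coeff_Dmap_even]
    rw [h3, coeff_Dmap_odd]
    ring

/-- 2w(n) = u(2n) = u(2n−1) for all n ≥ 2. -/
theorem stmt17 (u w : ℕ → ℤ)
    (hu : ∀ n : ℕ, u n = ∑' i : ℕ, PowerSeries.coeff n (Useries (i + 1)))
    (hw : ∀ n : ℕ, w n = ∑' i : ℕ, PowerSeries.coeff n (Wseries (i + 2))) :
    ∀ n, 2 ≤ n → 2 * w n = u (2 * n) ∧ u (2 * n) = u (2 * n - 1) := by
  intro n hn
  have hUsum : ∀ m : ℕ, Summable (fun i => PowerSeries.coeff m (Useries (i + 1))) := by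
    intro m
    apply summable_of_ne_finset_zero (s := Finset.range (m + 1))
    intro i hi
    rw [Finset.mem_range, not_lt] at hi
    apply Useries_vanish
    have h1 : m + 2 < 2 ^ (m + 2) := Nat.lt_two_pow_self
    have h2 : (2 : ℕ) ^ (m + 2) ≤ 2 ^ (i + 1) := Nat.pow_le_pow_right (by norm_num) (by omega)
    omega
  have hWsum : Summable (fun i => PowerSeries.coeff n (Wseries (i + 2))) := by
    apply summable_of_ne_finset_zero (s := Finset.range (n + 1))
    intro i hi
    rw [Finset.mem_range, not_lt] at hi
    apply Wseries_vanish
    have h1 : n < 2 ^ n := Nat.lt_two_pow_self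
    have h2 : (2 : ℕ) ^ n ≤ 2 ^ (i + 1) := Nat.pow_le_pow_right (by norm_num) (by omega)
    exact (by omega : n < 2 ^ (i + 1))
  have hU1 : Useries 1 = 2 * PowerSeries.X + 2 * PowerSeries.X ^ 2 := by
    unfold Useries
    norm_num
    ring
  have hC2 : (PowerSeries.C) 2 = (2 : PowerSeries ℤ) := map_ofNat _ 2
  have hcoeffU1 : ∀ m : ℕ, m ≠ 1 → m ≠ 2 → PowerSeries.coeff m (Useries (0 + 1)) = 0 := by
    intro m hm1 hm2
    have : Useries (0 + 1) = (PowerSeries.C) 2 * PowerSeries.X +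
        (PowerSeries.C) 2 * PowerSeries.X ^ 2 := by
      rw [hC2]
      exact hU1
    rw [this, map_add, PowerSeries.coeff_C_mul, PowerSeries.coeff_C_mul,
      PowerSeries.coeff_X, PowerSeries.coeff_X_pow, if_neg hm1, if_neg hm2]
    ring
  have e1 : u (2 * n) = 2 * w n := by
    rw [hu (2 * n), hw n]
    rw [Summable.tsum_eq_zero_add (hUsum (2 * n))]
    rw [hcoeffU1 (2 * n) (by omega) (by omega), zero_add]
    rw [tsum_congr (fun i => (keyCoeff i n (by omega)).1)]
    exact Summable.tsum_mul_left 2 hWsum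
  have e2 : u (2 * n - 1) = 2 * w n := by
    rw [hu (2 * n - 1), hw n]
    rw [Summable.tsum_eq_zero_add (hUsum (2 * n - 1))]
    rw [hcoeffU1 (2 * n - 1) (by omega) (by omega), zero_add]
    rw [tsum_congr (fun i => (keyCoeff i n (by omega)).2)]
    exact Summable.tsum_mul_left 2 hWsum
  exact ⟨e1.symm, e1.trans e2.symm⟩
end
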